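/- arXiv:math/0204246 — 7 statements merged into one kernel-verified Lean document; each statement's English description precedes it below -/
import Mathlib

section
/- Let L be a free abelian group of finite rank and V = L ⊗ ℝ. The maps X ↦ X ∩ L and S ↦ (the convex cone generated by S) are mutually inverse bijections between the set of rational convex cones of V (cones generated by a subset of L) and the set of saturated submonoids of L (submonoids S such that nx ∈ S with n ≥ 1 implies x ∈ S). Moreover these bijections preserve the property of being finitely generated. -/
open scoped TensorProduct

/-- A (convex) cone in a real vector space: contains `0`, closed under addition and
scaling by nonnegative reals. -/
def IsConeSet {V : Type} [AddCommGroup V] [Module ℝ V] (T : Set V) : Prop :=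
  (0 : V) ∈ T ∧ (∀ x ∈ T, ∀ y ∈ T, x + y ∈ T) ∧ ∀ c : ℝ, 0 ≤ c → ∀ x ∈ T, c • x ∈ T

/-- The convex cone generated by a subset `S`. -/
def coneGen {V : Type} [AddCommGroup V] [Module ℝ V] (S : Set V) : Set V :=
  ⋂₀ {T : Set V | S ⊆ T ∧ IsConeSet T}

/-- A submonoid `S` of a lattice `L` is saturated if `n • x ∈ S` with `n ≥ 1` implies `x ∈ S`. -/
def IsSaturated {L : Type} [AddCommGroup L] (S : AddSubmonoid L) : Prop :=
  ∀ (x : L) (n : ℕ), 0 < n → n • x ∈ S → x ∈ S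

open Matrix

noncomputable def qr : ℚ →+* ℝ := algebraMap ℚ ℝ
@[simp] lemma qr_apply (q : ℚ) : qr q = (q : ℝ) := eq_ratCast qr q

section ConeBasics
variable {V : Type} [AddCommGroup V] [Module ℝ V]

lemma subset_coneGen (S : Set V) : S ⊆ coneGen S :=
  fun _ hx => fun _ hT => hT.1 hx

lemma isConeSet_coneGen (S : Set V) : IsConeSet (coneGen S) := by
  refine ⟨fun T hT => hT.2.1, fun x hx y hy T hT => hT.2.2.1 x (hx T hT) y (hy T hT),
    fun c hc x hx T hT => hT.2.2.2 c hc x (hx T hT)⟩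

lemma coneGen_subset {S T : Set V} (hST : S ⊆ T) (hT : IsConeSet T) : coneGen S ⊆ T :=
  fun _ hx => hx T ⟨hST, hT⟩

lemma coneGen_mono {S T : Set V} (h : S ⊆ T) : coneGen S ⊆ coneGen T :=
  coneGen_subset (h.trans (subset_coneGen T)) (isConeSet_coneGen T)

lemma sum_mem_cone {α : Type*} {C : Set V} (hC : IsConeSet C) (t : Finset α) (g : α → V)
    (hg : ∀ i ∈ t, g i ∈ C) : ∑ i ∈ t, g i ∈ C := by
  classical
  induction t using Finset.induction with
  | empty => simpa using hC.1
  | @insert a s hx ih =>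
    rw [Finset.sum_insert hx]
    exact hC.2.1 _ (hg _ (Finset.mem_insert_self _ _)) _
      (ih fun i hi => hg i (Finset.mem_insert_of_mem hi))

lemma mem_coneGen_iff {S : Set V} {z : V} :
    z ∈ coneGen S ↔ ∃ (n : ℕ) (c : Fin n → ℝ) (f : Fin n → V),
      (∀ i, 0 ≤ c i) ∧ (∀ i, f i ∈ S) ∧ z = ∑ i, c i • f i := by
  constructor
  · intro hz
    refine hz {z | ∃ (n : ℕ) (c : Fin n → ℝ) (f : Fin n → V),
      (∀ i, 0 ≤ c i) ∧ (∀ i, f i ∈ S) ∧ z = ∑ i, c i • f i}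
      ⟨fun x hx => ⟨1, fun _ => 1, fun _ => x, fun _ => zero_le_one,
      fun _ => hx, by simp⟩, ?_, ?_, ?_⟩
    · exact ⟨0, Fin.elim0, Fin.elim0, fun i => i.elim0, fun i => i.elim0, by simp⟩
    · rintro x ⟨n, c, f, hc, hf, rfl⟩ y ⟨m, d, g, hd, hg, rfl⟩
      refine ⟨n + m, Fin.append c d, Fin.append f g, ?_, ?_, ?_⟩
      · intro i
        refine i.addCases (fun j => ?_) (fun j => ?_)
        · rw [Fin.append_left]; exact hc j
        · rw [Fin.append_right]; exact hd j
      · intro i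
        refine i.addCases (fun j => ?_) (fun j => ?_)
        · rw [Fin.append_left]; exact hf j
        · rw [Fin.append_right]; exact hg j
      · rw [Fin.sum_univ_add]
        simp
    · rintro a ha x ⟨n, c, f, hc, hf, rfl⟩
      refine ⟨n, fun i => a * c i, f, fun i => mul_nonneg ha (hc i), hf, ?_⟩
      rw [Finset.smul_sum]
      simp [smul_smul]
  · rintro ⟨n, c, f, hc, hf, rfl⟩
    refine sum_mem_cone (isConeSet_coneGen S) _ _ fun i _ => ?_
    have h := isConeSet_coneGen S
    exact h.2.2 _ (hc i) _ (subset_coneGen S (hf i))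

lemma mem_coneGen_range_iff {α : Type*} [Fintype α] {g : α → V} {z : V} :
    z ∈ coneGen (Set.range g) ↔ ∃ c : α → ℝ, (∀ a, 0 ≤ c a) ∧ z = ∑ a, c a • g a := by
  classical
  rw [mem_coneGen_iff]
  constructor
  · rintro ⟨n, c, f, hc, hf, rfl⟩
    choose a ha using hf
    refine ⟨fun v => ∑ i ∈ Finset.univ.filter (fun i => a i = v), c i,
      fun v => Finset.sum_nonneg fun i _ => hc i, ?_⟩
    rw [Finset.sum_congr rfl (fun v _ => Finset.sum_smul ..)]
    rw [← Finset.sum_fiberwise Finset.univ a (fun i => c i • f i)]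
    refine Finset.sum_congr rfl fun v _ => Finset.sum_congr rfl fun i hi => ?_
    rw [Finset.mem_filter] at hi
    rw [← ha i, hi.2]
  · rintro ⟨c, hc, rfl⟩
    classical
    refine ⟨Fintype.card α, c ∘ (Fintype.equivFin α).symm, g ∘ (Fintype.equivFin α).symm,
      fun i => hc _, fun i => Set.mem_range_self _, ?_⟩
    rw [← Equiv.sum_comp (Fintype.equivFin α).symm (fun a => c a • g a)]
    rfl

end ConeBasics


lemma qr_mulVec {m n : Type} [Fintype n] (M : Matrix m n ℚ) (v : n → ℚ) :
    (M.map qr) *ᵥ (qr ∘ v) = qr ∘ (M *ᵥ v) :=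
  funext fun i => (RingHom.map_mulVec qr M v i).symm

lemma rat_solution_indep {m : Type} [Fintype m] [DecidableEq m] {N : ℕ}
    (A : Matrix m (Fin N) ℚ) (hv : LinearIndependent ℚ (fun i => Aᵀ i))
    (x : m → ℚ) (c : Fin N → ℝ) (hc : ∀ i, 0 ≤ c i)
    (h : (A.map qr) *ᵥ c = qr ∘ x) :
    ∃ d : Fin N → ℚ, (∀ i, 0 ≤ d i) ∧ A *ᵥ d = x := by
  classical
  set G : Matrix (Fin N) (Fin N) ℚ := Aᵀ * A with hG
  have hGdet : G.det ≠ 0 := by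
    intro hdet
    obtain ⟨a, ha, haG⟩ := Matrix.exists_mulVec_eq_zero_iff.2 hdet
    have hker : A *ᵥ a = 0 := by
      have hmem : a ∈ LinearMap.ker (Aᵀ * A).mulVecLin := by
        rw [LinearMap.mem_ker, Matrix.mulVecLin_apply]; exact haG
      rw [Matrix.ker_mulVecLin_transpose_mul_self] at hmem
      rw [LinearMap.mem_ker, Matrix.mulVecLin_apply] at hmem
      exact hmem
    refine ha (funext fun i => Fintype.linearIndependent_iff.1 hv a ?_ i)
    funext k
    have hkk := congrFun hker k
    simp only [Matrix.mulVec, dotProduct, Pi.zero_apply] at hkk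
    simp only [Finset.sum_apply, Pi.smul_apply, Matrix.transpose_apply, smul_eq_mul,
      Pi.zero_apply]
    rw [← hkk]
    exact Finset.sum_congr rfl fun i _ => mul_comm _ _
  have hGdet' : (G.map qr).det ≠ 0 := by
    rw [← RingHom.mapMatrix_apply, ← RingHom.map_det]
    simpa using hGdet
  set d : Fin N → ℚ := G⁻¹ *ᵥ (Aᵀ *ᵥ x) with hd
  have hGd : G *ᵥ d = Aᵀ *ᵥ x := by
    rw [hd, Matrix.mulVec_mulVec, Matrix.mul_nonsing_inv _ (isUnit_iff_ne_zero.2 hGdet),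
      Matrix.one_mulVec]
  have hGc : (G.map qr) *ᵥ c = (Aᵀ.map qr) *ᵥ (qr ∘ x) := by
    rw [← h, Matrix.mulVec_mulVec, ← Matrix.map_mul]
  have hGdr : (G.map qr) *ᵥ (qr ∘ d) = (Aᵀ.map qr) *ᵥ (qr ∘ x) := by
    rw [qr_mulVec, hGd, ← qr_mulVec]
  have hcd : qr ∘ d = c := by
    by_contra hne
    have hzero : (G.map qr) *ᵥ (qr ∘ d - c) = 0 := by
      rw [Matrix.mulVec_sub, hGdr, hGc, sub_self]
    exact hGdet' (Matrix.exists_mulVec_eq_zero_iff.1 ⟨_, sub_ne_zero.2 hne, hzero⟩)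
  refine ⟨d, fun i => ?_, ?_⟩
  · have h1 : qr (d i) = c i := congrFun hcd i
    have h2 := hc i
    rw [← h1, qr_apply] at h2
    exact_mod_cast h2
  · have h3 : qr ∘ (A *ᵥ d) = qr ∘ x := by
      rw [← qr_mulVec, hcd, h]
    funext k
    have h4 := congrFun h3 k
    simp only [Function.comp_apply, qr_apply, Rat.cast_inj] at h4
    exact h4

lemma rat_solution {m : Type} [Fintype m] [DecidableEq m] :
    ∀ (n : ℕ) (A : Matrix m (Fin n) ℚ) (x : m → ℚ) (c : Fin n → ℝ),
    (∀ i, 0 ≤ c i) → ((A.map qr) *ᵥ c = qr ∘ x) →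
    ∃ d : Fin n → ℚ, (∀ i, 0 ≤ d i) ∧ A *ᵥ d = x := by
  intro n
  induction n with
  | zero =>
    intro A x c _ h
    refine ⟨0, fun i => le_refl _, funext fun k => ?_⟩
    have h5 := congrFun h k
    simp only [Matrix.mulVec, dotProduct, Finset.univ_eq_empty, Finset.sum_empty,
      Function.comp_apply, qr_apply] at h5 ⊢
    have h6 : x k = 0 := by exact_mod_cast h5.symm
    rw [h6]
  | succ n ih =>
    intro A x c hc h
    by_cases hind : LinearIndependent ℚ (fun i => Aᵀ i)
    · exact rat_solution_indep A hind x c hc h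
    · obtain ⟨g0, hg0, i1, hi1⟩ := Fintype.not_linearIndependent_iff.1 hind
      obtain ⟨g, hgrel, i2, hi2⟩ : ∃ g : Fin (n+1) → ℚ,
          (∑ i, g i • Aᵀ i = 0) ∧ ∃ i, 0 < g i := by
        rcases lt_or_gt_of_ne hi1 with hlt | hgt
        · exact ⟨-g0, by simpa [neg_smul] using congrArg Neg.neg hg0, i1, by simpa using hlt⟩
        · exact ⟨g0, hg0, i1, hgt⟩
      have hAg : A *ᵥ g = 0 := by
        funext k
        have h6 := congrFun hgrel k
        simp only [Finset.sum_apply, Pi.smul_apply, Matrix.transpose_apply, smul_eq_mul,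
          Pi.zero_apply] at h6
        simp only [Matrix.mulVec, dotProduct, Pi.zero_apply]
        rw [← h6]
        exact Finset.sum_congr rfl fun i _ => mul_comm _ _
      have hAg' : (A.map qr) *ᵥ (qr ∘ g) = 0 := by
        rw [qr_mulVec, hAg]
        funext k; simp
      set P : Finset (Fin (n+1)) := Finset.univ.filter (fun i => 0 < g i) with hP
      have hPne : P.Nonempty := ⟨i2, by simp [hP, hi2]⟩
      obtain ⟨i0, hi0P, hi0min⟩ := Finset.exists_min_image P (fun i => c i / ((g i : ℚ) : ℝ)) hPne
      have hgi0 : 0 < g i0 := by simpa [hP] using hi0P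
      have hgi0r : (0:ℝ) < ((g i0 : ℚ) : ℝ) := by exact_mod_cast hgi0
      set t : ℝ := c i0 / ((g i0 : ℚ) : ℝ) with ht
      have htnn : 0 ≤ t := div_nonneg (hc i0) hgi0r.le
      set c' : Fin (n+1) → ℝ := fun i => c i - t * ((g i : ℚ) : ℝ) with hc'
      have hc'nn : ∀ i, 0 ≤ c' i := by
        intro i
        by_cases hgi : 0 < g i
        · have hiP : i ∈ P := by simp [hP, hgi]
          have hgir : (0:ℝ) < ((g i : ℚ) : ℝ) := by exact_mod_cast hgi
          have hmin := hi0min i hiP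
          have hle : t * ((g i : ℚ) : ℝ) ≤ c i := by
            rw [← le_div_iff₀ hgir]; exact hmin
          simpa [hc'] using sub_nonneg.2 hle
        · push_neg at hgi
          have hgir : ((g i : ℚ) : ℝ) ≤ 0 := by exact_mod_cast hgi
          have hle : t * ((g i : ℚ) : ℝ) ≤ c i :=
            le_trans (mul_nonpos_of_nonneg_of_nonpos htnn hgir) (hc i)
          simpa [hc'] using sub_nonneg.2 hle
      have hc'i0 : c' i0 = 0 := by
        simp only [hc', ht]
        field_simp
        ring
      have hAC : (A.map qr) *ᵥ c' = qr ∘ x := by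
        have hcc : c' = c - t • (qr ∘ g) := by
          funext i; simp [hc', smul_eq_mul]
        rw [hcc, Matrix.mulVec_sub, h, Matrix.mulVec_smul, hAg', smul_zero, sub_zero]
      set B : Matrix m (Fin n) ℚ := A.submatrix id i0.succAbove with hB
      have hBc : (B.map qr) *ᵥ (c' ∘ i0.succAbove) = qr ∘ x := by
        funext k
        have hk := congrFun hAC k
        simp only [Matrix.mulVec, dotProduct] at hk ⊢
        rw [Fin.sum_univ_succAbove (fun i => (A.map qr) k i * c' i) i0] at hk
        rw [hc'i0, mul_zero, zero_add] at hk
        simpa [hB, Matrix.submatrix, Matrix.map] using hk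
      obtain ⟨d', hd'nn, hd'⟩ := ih B x (c' ∘ i0.succAbove) (fun j => hc'nn _) hBc
      set D : Fin (n+1) → ℚ := i0.insertNth (0:ℚ) d' with hD
      refine ⟨D, ?_, ?_⟩
      · intro i
        refine Fin.succAboveCases i0 ?_ ?_ i
        · rw [hD]; simp
        · intro j; rw [hD]; simpa using hd'nn j
      · funext k
        have hk := congrFun hd' k
        simp only [Matrix.mulVec, dotProduct] at hk ⊢
        rw [Fin.sum_univ_succAbove (fun i => A k i * D i) i0]
        rw [hD]
        simp only [Fin.insertNth_apply_same, mul_zero, zero_add,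
          Fin.insertNth_apply_succAbove]
        simpa [hB, Matrix.submatrix] using hk

section Bridge

variable {L : Type} [AddCommGroup L] [Module.Free ℤ L] [Module.Finite ℤ L]

/-- coordinates of a tensor identity -/
lemma repr_coord (b : Module.Basis (Module.Free.ChooseBasisIndex ℤ L) ℤ L)
    {α : Type} [Fintype α] (z : L) (c : α → ℝ) (s : α → L)
    (h : (1:ℝ) ⊗ₜ[ℤ] z = ∑ a, c a • ((1:ℝ) ⊗ₜ[ℤ] (s a)))
    (k : Module.Free.ChooseBasisIndex ℤ L) :
    ((b.repr z k : ℤ) : ℝ) = ∑ a, c a * ((b.repr (s a) k : ℤ) : ℝ) := by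
  have h2 := congrArg (fun w => (b.baseChange ℝ).repr w k) h
  simp only [map_sum, _root_.map_smul, Finsupp.coe_finset_sum, Finset.sum_apply, Finsupp.coe_smul,
    Pi.smul_apply, Module.Basis.baseChange_repr_tmul, smul_eq_mul, mul_one] at h2
  simpa [zsmul_eq_mul] using h2

end Bridge

section Rat2
variable {L : Type} [AddCommGroup L] [Module.Free ℤ L] [Module.Finite ℤ L]

lemma rat_combination (x : L) {n : ℕ} (s : Fin n → L) (c : Fin n → ℝ) (hc : ∀ i, 0 ≤ c i)
    (h : (1:ℝ) ⊗ₜ[ℤ] x = ∑ i, c i • ((1:ℝ) ⊗ₜ[ℤ] (s i))) :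
    ∃ (N : ℕ) (e : Fin n → ℕ), 0 < N ∧ N • x = ∑ i, e i • s i := by
  classical
  set b := Module.Free.chooseBasis ℤ L with hb
  have hco := repr_coord b x c s h
  set A : Matrix (Module.Free.ChooseBasisIndex ℤ L) (Fin n) ℚ :=
    Matrix.of (fun k i => ((b.repr (s i) k : ℤ) : ℚ)) with hA
  set xq : Module.Free.ChooseBasisIndex ℤ L → ℚ := fun k => ((b.repr x k : ℤ) : ℚ) with hxq
  have hsol : (A.map qr) *ᵥ c = qr ∘ xq := by
    funext k
    simp only [Matrix.mulVec, dotProduct, Matrix.map_apply, hA, Matrix.of_apply,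
      Function.comp_apply, qr_apply, hxq]
    push_cast
    rw [hco k]
    exact Finset.sum_congr rfl fun i _ => mul_comm _ _
  obtain ⟨d, hdnn, hAd⟩ := rat_solution n A xq c hc hsol
  set N : ℕ := ∏ i, (d i).den with hN
  have hNpos : 0 < N := Finset.prod_pos fun i _ => (d i).pos
  have key : ∀ i, ∃ e : ℕ, (e : ℚ) = (N : ℚ) * d i := by
    intro i
    obtain ⟨t, ht⟩ := Finset.dvd_prod_of_mem (fun i => (d i).den) (Finset.mem_univ i)
    refine ⟨t * (d i).num.toNat, ?_⟩
    have hnum : 0 ≤ (d i).num := Rat.num_nonneg.2 (hdnn i)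
    have hden : ((d i).den : ℚ) ≠ 0 := Nat.cast_ne_zero.2 (d i).den_nz
    have h7 : ((d i).num : ℚ) = d i * ((d i).den : ℚ) :=
      (div_eq_iff hden).1 (Rat.num_div_den (d i))
    have h8 : (((d i).num.toNat : ℕ) : ℚ) = ((d i).num : ℚ) := by
      exact_mod_cast Int.toNat_of_nonneg hnum
    rw [hN, ht]
    push_cast
    rw [h8, h7]
    ring
  choose e he using key
  refine ⟨N, e, hNpos, ?_⟩
  apply b.repr.injective
  ext k
  have intgoal : (N:ℤ) * (b.repr x k) = ∑ i, (e i : ℤ) * (b.repr (s i) k) := by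
    have hq : (((N:ℤ) * b.repr x k : ℤ) : ℚ) = ((∑ i, (e i:ℤ) * b.repr (s i) k : ℤ) : ℚ) := by
      push_cast
      simp only [he]
      have hk := congrFun hAd k
      simp only [Matrix.mulVec, dotProduct, hA, Matrix.of_apply, hxq] at hk
      rw [← hk, Finset.mul_sum]
      exact Finset.sum_congr rfl fun i _ => by ring
    exact_mod_cast hq
  calc b.repr (N • x) k = N • (b.repr x k) := by rw [map_nsmul]; rfl
    _ = (N:ℤ) * (b.repr x k) := by rw [nsmul_eq_mul]
    _ = ∑ i, (e i : ℤ) * (b.repr (s i) k) := intgoal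
    _ = b.repr (∑ i, e i • s i) k := by
        rw [map_sum]
        rw [Finsupp.finset_sum_apply]
        refine Finset.sum_congr rfl fun i _ => ?_
        rw [map_nsmul]
        simp [nsmul_eq_mul]

end Rat2


section Finiteness

lemma finite_bounded {L : Type} [AddCommGroup L] {κ : Type} [Fintype κ]
    (b : Module.Basis κ ℤ L) (M : κ → ℤ) :
    {x : L | ∀ k, |b.repr x k| ≤ M k}.Finite := by
  classical
  have hinj : Function.Injective (fun x : L => (fun k : κ => b.repr x k)) := by
    intro x y hxy
    apply b.repr.injective
    ext k
    exact congrFun hxy k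
  have hfin : (Set.univ.pi fun k : κ => Set.Icc (-(M k)) (M k)).Finite :=
    Set.Finite.pi fun k => Set.finite_Icc _ _
  refine (hfin.preimage hinj.injOn).subset ?_
  intro x hx
  simp only [Set.mem_preimage, Set.mem_pi, Set.mem_univ, forall_true_left, Set.mem_Icc]
  intro k
  exact abs_le.1 (hx k)

end Finiteness

section Main

variable {L : Type} [AddCommGroup L] [Module.Free ℤ L] [Module.Finite ℤ L]

lemma iota_zero : (1:ℝ) ⊗ₜ[ℤ] (0 : L) = 0 := TensorProduct.tmul_zero _ _

lemma iota_add (a b : L) : (1:ℝ) ⊗ₜ[ℤ] (a + b) = (1:ℝ) ⊗ₜ[ℤ] a + (1:ℝ) ⊗ₜ[ℤ] b :=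
  TensorProduct.tmul_add _ _ _

lemma iota_sub (a b : L) : (1:ℝ) ⊗ₜ[ℤ] (a - b) = (1:ℝ) ⊗ₜ[ℤ] a - (1:ℝ) ⊗ₜ[ℤ] b :=
  TensorProduct.tmul_sub _ _ _

lemma iota_nsmul (n : ℕ) (a : L) :
    (1:ℝ) ⊗ₜ[ℤ] (n • a) = ((n : ℝ)) • ((1:ℝ) ⊗ₜ[ℤ] a) := by
  calc (1:ℝ) ⊗ₜ[ℤ] (n • a) = (1:ℝ) ⊗ₜ[ℤ] ((n:ℤ) • a) := by rw [natCast_zsmul]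
    _ = (n:ℤ) • ((1:ℝ) ⊗ₜ[ℤ] a) := TensorProduct.tmul_smul _ _ _
    _ = ((n:ℤ):ℝ) • ((1:ℝ) ⊗ₜ[ℤ] a) := (Int.cast_smul_eq_zsmul ℝ _ _).symm
    _ = (n:ℝ) • ((1:ℝ) ⊗ₜ[ℤ] a) := by norm_num

lemma iota_sum {α : Type} (s : Finset α) (g : α → L) :
    (1:ℝ) ⊗ₜ[ℤ] (∑ a ∈ s, g a) = ∑ a ∈ s, (1:ℝ) ⊗ₜ[ℤ] (g a) :=
  TensorProduct.tmul_sum _ _ _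

/-- Part 2: for a saturated submonoid, the preimage of the generated cone is the monoid. -/
lemma sat_preimage (S : AddSubmonoid L) (hS : IsSaturated S) :
    (fun x : L => (1:ℝ) ⊗ₜ[ℤ] x) ⁻¹'
      coneGen ((fun x : L => (1:ℝ) ⊗ₜ[ℤ] x) '' (S : Set L)) = (S : Set L) := by
  apply Set.Subset.antisymm
  · intro x hx
    rw [Set.mem_preimage, mem_coneGen_iff] at hx
    obtain ⟨n, c, f, hc, hf, heq⟩ := hx
    choose s hsS hseq using hf
    have heq2 : (1:ℝ) ⊗ₜ[ℤ] x = ∑ i, c i • ((1:ℝ) ⊗ₜ[ℤ] s i) := by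
      rw [heq]
      exact Finset.sum_congr rfl fun i _ => by rw [← hseq i]
    obtain ⟨N, e, hN, hNx⟩ := rat_combination x s c hc heq2
    have hmem : N • x ∈ S := by
      rw [hNx]
      exact AddSubmonoid.sum_mem S fun i _ => AddSubmonoid.nsmul_mem S (hsS i) _
    exact hS x N hN hmem
  · intro x hx
    exact subset_coneGen _ (Set.mem_image_of_mem _ hx)

/-- Gordan-type lemma: if the cone of a saturated submonoid is finitely generated
(by lattice points), the monoid is finitely generated. -/
lemma gordan (S : AddSubmonoid L) (hS : IsSaturated S) (F : Finset L)
    (hF : coneGen ((fun x : L => (1:ℝ) ⊗ₜ[ℤ] x) '' (S : Set L)) =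
      coneGen ((fun x : L => (1:ℝ) ⊗ₜ[ℤ] x) '' (F : Set L))) : S.FG := by
  classical
  set ι : L → ℝ ⊗[ℤ] L := fun x => (1:ℝ) ⊗ₜ[ℤ] x with hι
  have hpre := sat_preimage S hS
  set b := Module.Free.chooseBasis ℤ L with hb
  have hrange : ι '' (F : Set L) = Set.range (fun a : {f : L // f ∈ F} => ι a.1) := by
    ext z
    constructor
    · rintro ⟨f, hf, rfl⟩
      exact ⟨⟨f, Finset.mem_coe.1 hf⟩, rfl⟩
    · rintro ⟨a, rfl⟩
      exact ⟨a.1, Finset.mem_coe.2 a.2, rfl⟩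
  set Bset : Set L := {x : L | ∃ t : {f : L // f ∈ F} → ℝ,
    (∀ a, 0 ≤ t a ∧ t a ≤ 1) ∧ ι x = ∑ a, t a • ι a.1} with hBset
  have hBS : Bset ⊆ (S : Set L) := by
    rintro x ⟨t, ht, hxt⟩
    have hmem : ι x ∈ coneGen (ι '' (F : Set L)) := by
      rw [hrange, mem_coneGen_range_iff]
      exact ⟨t, fun a => (ht a).1, hxt⟩
    rw [← hF] at hmem
    rw [← hpre]
    exact hmem
  have hFB : ∀ f (hf : f ∈ F), f ∈ Bset := by
    intro f hf
    refine ⟨fun a => if a = ⟨f, hf⟩ then 1 else 0,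
      fun a => by by_cases h : a = ⟨f, hf⟩ <;> simp [h], ?_⟩
    have h1 : ∀ a : {g // g ∈ F}, (if a = ⟨f, hf⟩ then (1:ℝ) else 0) • ι a.1
        = if a = ⟨f, hf⟩ then ι a.1 else 0 := fun a => by split <;> simp
    rw [Finset.sum_congr rfl fun a _ => h1 a,
      Finset.sum_ite_eq' Finset.univ (⟨f, hf⟩ : {g // g ∈ F}) (fun a => ι a.1)]
    simp
  have hBfin : Bset.Finite := by
    set M : Module.Free.ChooseBasisIndex ℤ L → ℤ :=
      fun k => ∑ a : {f : L // f ∈ F}, |b.repr a.1 k| with hM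
    refine (finite_bounded b M).subset ?_
    rintro x ⟨t, ht, hxt⟩ k
    have hco := repr_coord b x t (fun a => a.1) hxt k
    have hreal : |((b.repr x k : ℤ) : ℝ)| ≤ ((M k : ℤ) : ℝ) := by
      rw [hco]
      refine (Finset.abs_sum_le_sum_abs _ _).trans ?_
      rw [hM]
      push_cast
      refine Finset.sum_le_sum fun a _ => ?_
      rw [abs_mul]
      calc |t a| * |((b.repr a.1 k : ℤ) : ℝ)| ≤ 1 * |((b.repr a.1 k : ℤ) : ℝ)| := by
            refine mul_le_mul_of_nonneg_right ?_ (abs_nonneg _)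
            rw [abs_of_nonneg (ht a).1]
            exact (ht a).2
        _ = |((b.repr a.1 k : ℤ) : ℝ)| := one_mul _
    rw [← Int.cast_abs] at hreal
    exact_mod_cast hreal
  have hclosure : AddSubmonoid.closure Bset = S := by
    apply le_antisymm
    · rw [AddSubmonoid.closure_le]
      exact hBS
    · intro x hx
      have hx2 : ι x ∈ coneGen (ι '' (F : Set L)) := by
        rw [← hF]
        exact subset_coneGen _ (Set.mem_image_of_mem _ hx)
      rw [hrange, mem_coneGen_range_iff] at hx2
      obtain ⟨t, htnn, hxt⟩ := hx2
      set y := ∑ a : {f : L // f ∈ F}, (⌊t a⌋₊) • (a.1 : L) with hy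
      have hyB : y ∈ AddSubmonoid.closure Bset :=
        AddSubmonoid.sum_mem _ fun a _ =>
          AddSubmonoid.nsmul_mem _ (AddSubmonoid.subset_closure (hFB a.1 a.2)) _
      have hxyB : x - y ∈ Bset := by
        refine ⟨fun a => t a - (⌊t a⌋₊ : ℝ), fun a =>
          ⟨sub_nonneg.2 (Nat.floor_le (htnn a)), ?_⟩, ?_⟩
        · show t a - (⌊t a⌋₊ : ℝ) ≤ 1
          have h9 := Nat.lt_floor_add_one (t a)
          linarith
        · have hiy : ι y = ∑ a : {f : L // f ∈ F}, ((⌊t a⌋₊ : ℝ)) • ι a.1 := by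
            rw [hy]
            show (1:ℝ) ⊗ₜ[ℤ] _ = _
            rw [iota_sum]
            exact Finset.sum_congr rfl fun a _ => iota_nsmul _ _
          have hsub : ι (x - y) = ι x - ι y := iota_sub x y
          rw [hsub, hxt, hiy, ← Finset.sum_sub_distrib]
          exact Finset.sum_congr rfl fun a _ => (sub_smul _ _ _).symm
      have hxeq : x = (x - y) + y := (sub_add_cancel x y).symm
      rw [hxeq]
      exact AddSubmonoid.add_mem _ (AddSubmonoid.subset_closure hxyB) hyB
  exact ⟨hBfin.toFinset, by rw [Set.Finite.coe_toFinset]; exact hclosure⟩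

end Main

/-- The maps `X ↦ X ∩ L` and `S ↦ coneGen S` are mutually inverse bijections between
rational convex cones of `V = ℝ ⊗ L` and saturated submonoids of `L`, and they
preserve the property of being finitely generated. -/
theorem rational_cones_correspond_to_saturated_submonoids
    (L : Type) [AddCommGroup L] [Module.Free ℤ L] [Module.Finite ℤ L] :
    let ι : L → ℝ ⊗[ℤ] L := fun x => (1 : ℝ) ⊗ₜ[ℤ] x
    (∀ X : Set (ℝ ⊗[ℤ] L), (∃ S : Set L, X = coneGen (ι '' S)) →
      ∃ S : AddSubmonoid L, IsSaturated S ∧ (S : Set L) = ι ⁻¹' X ∧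
        coneGen (ι '' (S : Set L)) = X) ∧
    (∀ S : AddSubmonoid L, IsSaturated S →
      ι ⁻¹' coneGen (ι '' (S : Set L)) = (S : Set L)) ∧
    (∀ S : AddSubmonoid L, IsSaturated S →
      (S.FG ↔ ∃ F : Finset L, coneGen (ι '' (S : Set L)) = coneGen (ι '' (F : Set L)))) := by
  intro ι
  refine ⟨?_, ?_, ?_⟩
  · -- part 1
    rintro X ⟨S0, rfl⟩
    have hcone := isConeSet_coneGen (ι '' S0)
    refine ⟨{ carrier := ι ⁻¹' coneGen (ι '' S0),
              add_mem' := ?_, zero_mem' := ?_ }, ?_, rfl, ?_⟩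
    · intro a c ha hc
      show ι (a + c) ∈ coneGen (ι '' S0)
      show (1:ℝ) ⊗ₜ[ℤ] (a + c) ∈ _
      rw [iota_add]
      exact hcone.2.1 _ ha _ hc
    · show ι 0 ∈ coneGen (ι '' S0)
      show (1:ℝ) ⊗ₜ[ℤ] (0:L) ∈ _
      rw [iota_zero]
      exact hcone.1
    · intro x n hn hmem
      have hx : ((n:ℝ)) • ι x ∈ coneGen (ι '' S0) := by
        have : ι (n • x) = (n:ℝ) • ι x := iota_nsmul n x
        rwa [← this]
      have h2 := hcone.2.2 ((n:ℝ)⁻¹) (by positivity) _ hx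
      have hne : (n:ℝ) ≠ 0 := Nat.cast_ne_zero.2 hn.ne'
      rwa [smul_smul, inv_mul_cancel₀ hne, one_smul] at h2
    · apply Set.Subset.antisymm
      · exact coneGen_subset (Set.image_preimage_subset ι (coneGen (ι '' S0))) hcone
      · refine coneGen_mono (Set.image_mono (f := ι) ?_)
        intro s hs
        exact Set.mem_preimage.2 (subset_coneGen _ (Set.mem_image_of_mem _ hs))
  · -- part 2
    intro S hS
    exact sat_preimage S hS
  · -- part 3
    intro S hS
    constructor
    · rintro ⟨F, hF⟩
      refine ⟨F, Set.Subset.antisymm ?_ (coneGen_mono (Set.image_mono (f := ι) ?_))⟩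
      · refine coneGen_subset ?_ (isConeSet_coneGen _)
        rintro v ⟨s, hs, rfl⟩
        have hs2 : s ∈ AddSubmonoid.closure (F : Set L) := by
          rw [hF]
          exact hs
        refine AddSubmonoid.closure_induction
          (fun f hf => subset_coneGen _ (Set.mem_image_of_mem _ hf)) ?_ ?_ hs2
        · show ι 0 ∈ _
          show (1:ℝ) ⊗ₜ[ℤ] (0:L) ∈ _
          rw [iota_zero]
          exact (isConeSet_coneGen _).1
        · intro a c _ _ ha hc
          show ι (a + c) ∈ _
          show (1:ℝ) ⊗ₜ[ℤ] (a + c) ∈ _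
          rw [iota_add]
          exact (isConeSet_coneGen _).2.1 _ ha _ hc
      · intro f hf
        have hmem : f ∈ AddSubmonoid.closure (F : Set L) := AddSubmonoid.subset_closure hf
        rw [hF] at hmem
        exact hmem
    · rintro ⟨F, hF⟩
      exact gordan S hS F hF
end

section
/- Let M be a saturated submonoid of a lattice L. Then every face of M is saturated, the difference group F − F of a face F is a saturated subgroup of L, and F = M ∩ (F − F). -/
/-- `F` is a face of the submonoid `M`. -/
def IsFace {L : Type} [AddCommGroup L] (M F : AddSubmonoid L) : Prop :=
  F ≤ M ∧ ∀ x ∈ M, x ∉ F → ∀ y ∈ M, x + y ∉ F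

lemma mem_closure_iff_diff {L : Type} [AddCommGroup L] (F : AddSubmonoid L) (x : L) :
    x ∈ AddSubgroup.closure (F : Set L) ↔ ∃ a ∈ F, ∃ b ∈ F, x = a - b := by
  constructor
  · intro hx
    induction hx using AddSubgroup.closure_induction with
    | mem a ha => exact ⟨a, ha, 0, F.zero_mem, by simp⟩
    | zero => exact ⟨0, F.zero_mem, 0, F.zero_mem, by simp⟩
    | add x y _ _ hx hy =>
      obtain ⟨a, ha, b, hb, rfl⟩ := hx
      obtain ⟨c, hc, d, hd, rfl⟩ := hy
      exact ⟨a + c, F.add_mem ha hc, b + d, F.add_mem hb hd, by abel⟩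
    | neg x _ hx =>
      obtain ⟨a, ha, b, hb, rfl⟩ := hx
      exact ⟨b, hb, a, ha, by abel⟩
  · rintro ⟨a, ha, b, hb, rfl⟩
    exact sub_mem (AddSubgroup.subset_closure ha) (AddSubgroup.subset_closure hb)

/-- If `M` is a saturated submonoid of a lattice `L` and `F` is a face of `M`, then `F`
is saturated, the hull `F - F` (the subgroup generated by `F`) is a saturated subgroup of
`L`, and `F = M ∩ (F - F)`. -/
theorem face_of_saturated_monoid
    (L : Type) [AddCommGroup L] [Module.Free ℤ L] [Module.Finite ℤ L]
    (M F : AddSubmonoid L) (hM : IsSaturated M) (hF : IsFace M F) :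
    IsSaturated F ∧
    (∀ (x : L) (n : ℕ), 0 < n → n • x ∈ AddSubgroup.closure (F : Set L) →
      x ∈ AddSubgroup.closure (F : Set L)) ∧
    (F : Set L) = (M : Set L) ∩ (AddSubgroup.closure (F : Set L) : Set L) := by
  obtain ⟨hFM, hface⟩ := hF
  have hsat : IsSaturated F := by
    intro x n hn hnx
    have hxM : x ∈ M := hM x n hn (hFM hnx)
    by_contra hxF
    have h1 : (n - 1) • x ∈ M := M.nsmul_mem hxM (n - 1)
    have := hface x hxM hxF ((n - 1) • x) h1
    apply this
    have : x + (n - 1) • x = n • x := by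
      nth_rewrite 1 [← one_nsmul x]
      rw [← add_nsmul]; congr 1; omega
    rwa [this]
  refine ⟨hsat, ?_, ?_⟩
  · intro x n hn hx
    rw [mem_closure_iff_diff] at hx
    obtain ⟨a, ha, b, hb, hab⟩ := hx
    have key : n • (x + b) ∈ F := by
      have : n • (x + b) = a + (n - 1) • b := by
        rw [smul_add, hab]
        have : n • b = 1 • b + (n-1) • b := by rw [← add_nsmul]; congr 1; omega
        rw [this, one_nsmul]; abel
      rw [this]
      exact F.add_mem ha (F.nsmul_mem hb (n-1))
    have hxb : x + b ∈ F := hsat _ n hn key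
    have : x = (x + b) - b := by abel
    rw [this, mem_closure_iff_diff]
    exact ⟨x + b, hxb, b, hb, rfl⟩
  · ext x
    simp only [Set.mem_inter_iff, SetLike.mem_coe]
    constructor
    · intro hx
      exact ⟨hFM hx, AddSubgroup.subset_closure hx⟩
    · rintro ⟨hxM, hxC⟩
      rw [mem_closure_iff_diff] at hxC
      obtain ⟨a, ha, b, hb, hab⟩ := hxC
      by_contra hxF
      have : x + b ∉ F := hface x hxM hxF b (hFM hb)
      apply this
      have : x + b = a := by rw [hab]; abel
      rwa [this]
end

section
/- Let M be a submonoid of a lattice L and F a face of M. Then the faces of the dual face M − F (the submonoid of L generated by M ∪ (−F)) are exactly the monoids G − F where G is a face of M containing F. -/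
/-- The dual face `M - F`: the submonoid of `L` generated by `M ∪ (-F)`. -/
def dualFace {L : Type} [AddCommGroup L] (M F : AddSubmonoid L) : AddSubmonoid L :=
  AddSubmonoid.closure ((M : Set L) ∪ (-(F : Set L)))

lemma mem_dualFace {L : Type} [AddCommGroup L] (M F : AddSubmonoid L) (x : L) :
    x ∈ dualFace M F ↔ ∃ m ∈ M, ∃ f ∈ F, x = m - f := by
  constructor
  · intro hx
    induction hx using AddSubmonoid.closure_induction with
    | mem y hy =>
      rcases hy with hy | hy
      · exact ⟨y, hy, 0, F.zero_mem, by simp⟩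
      · exact ⟨0, M.zero_mem, -y, by simpa using hy, by simp⟩
    | zero => exact ⟨0, M.zero_mem, 0, F.zero_mem, by simp⟩
    | add a b ha hb iha ihb =>
      obtain ⟨m, hm, f, hf, rfl⟩ := iha
      obtain ⟨m', hm', f', hf', rfl⟩ := ihb
      exact ⟨m + m', M.add_mem hm hm', f + f', F.add_mem hf hf', by abel⟩
  · rintro ⟨m, hm, f, hf, rfl⟩
    have h1 : m ∈ dualFace M F := AddSubmonoid.subset_closure (Or.inl hm)
    have h2 : -f ∈ dualFace M F := AddSubmonoid.subset_closure (Or.inr (by simpa using hf))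
    simpa [sub_eq_add_neg] using AddSubmonoid.add_mem _ h1 h2

/-- The faces of the dual face `M - F` are exactly the monoids `G - F` where `G` is a
face of `M` containing `F`. -/
theorem faces_of_dual_face
    (L : Type) [AddCommGroup L] [Module.Free ℤ L] [Module.Finite ℤ L]
    (M F : AddSubmonoid L) (hF : IsFace M F) (H : AddSubmonoid L) :
    IsFace (dualFace M F) H ↔
      ∃ G : AddSubmonoid L, IsFace M G ∧ F ≤ G ∧ H = dualFace G F := by
  have hMle : M ≤ dualFace M F := fun m hm => AddSubmonoid.subset_closure (Or.inl hm)
  have hnegF : ∀ f ∈ F, -f ∈ dualFace M F := fun f hf =>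
    AddSubmonoid.subset_closure (Or.inr (by simpa using hf))
  constructor
  · rintro ⟨hHle, hHface⟩
    -- units of the dual face lie in H
    have hFH : ∀ f ∈ F, f ∈ H := by
      intro f hf
      by_contra hfH
      exact hHface f (hMle (hF.1 hf)) hfH (-f) (hnegF f hf) (by simpa using H.zero_mem)
    have hnegFH : ∀ f ∈ F, -f ∈ H := by
      intro f hf
      by_contra hfH
      exact hHface (-f) (hnegF f hf) hfH f (hMle (hF.1 hf)) (by simpa using H.zero_mem)
    refine ⟨M ⊓ H, ⟨inf_le_left, ?_⟩, fun f hf => ⟨hF.1 hf, hFH f hf⟩, ?_⟩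
    · intro x hx hnx y hy hxy
      have hxH : x ∉ H := fun h => hnx ⟨hx, h⟩
      exact hHface x (hMle hx) hxH y (hMle hy) hxy.2
    · apply le_antisymm
      · intro h hh
        obtain ⟨m, hm, f, hf, rfl⟩ := (mem_dualFace M F h).1 (hHle hh)
        have hmH : m ∈ H := by
          have := H.add_mem hh (hFH f hf)
          simpa using this
        exact (mem_dualFace _ F _).2 ⟨m, ⟨hm, hmH⟩, f, hf, rfl⟩
      · apply AddSubmonoid.closure_le.2
        rintro z (⟨hz1, hz2⟩ | hz)
        · exact hz2
        · have hz' : -z ∈ F := by simpa using hz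
          simpa using hnegFH (-z) hz'
  · rintro ⟨G, ⟨hGM, hGface⟩, hFG, rfl⟩
    have key : ∀ a ∈ M, ∀ b ∈ M, a + b ∈ G → a ∈ G := by
      intro a ha b hb hab
      by_contra h
      exact hGface a ha h b hb hab
    constructor
    · exact AddSubmonoid.closure_mono
        (Set.union_subset_union (fun x hx => hGM hx) le_rfl)
    · intro x hx hnx y hy hxy
      obtain ⟨m, hm, f, hf, rfl⟩ := (mem_dualFace M F x).1 hx
      obtain ⟨m', hm', f', hf', rfl⟩ := (mem_dualFace M F y).1 hy
      obtain ⟨g, hg, f'', hf'', heq⟩ := (mem_dualFace G F _).1 hxy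
      have h1 : (m + m') - (f + f') = g - f'' := by rw [← heq]; abel
      rw [sub_eq_sub_iff_add_eq_add] at h1
      have hmem : m + (m' + f'') ∈ G := by
        have h2 : m + (m' + f'') = g + (f + f') := by rw [← add_assoc]; exact h1
        rw [h2]
        exact G.add_mem hg (G.add_mem (hFG hf) (hFG hf'))
      have hmG : m ∈ G := key m hm (m' + f'') (M.add_mem hm' (hF.1 hf'')) hmem
      exact hnx ((mem_dualFace G F _).2 ⟨m, hmG, f, hf, rfl⟩)
end

section
/- Let M be a saturated submonoid of a lattice of finite rank and K an infinite field. In the monoid M̃ := Hom_monoid((M,+),(K,·)) (pointwise multiplication): (1) the unit group of M̃ is T(M) := {α : α⁻¹(K^×) = M}; (2) the idempotents of M̃ are exactly the elements e(F), F a face of M, where e(F)(m) = 1 if m ∈ F and 0 otherwise; (3) M̃ = T(M)·E where E is the set of idempotents. -/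
section Aux

variable {L : Type} [AddCommGroup L] {K : Type} [Field K] {M : AddSubmonoid L}

lemma phi_add (φ : Multiplicative M →* K) (x y : M) :
    φ (Multiplicative.ofAdd (x + y)) =
      φ (Multiplicative.ofAdd x) * φ (Multiplicative.ofAdd y) :=
  map_mul φ (Multiplicative.ofAdd x) (Multiplicative.ofAdd y)

/-- The support of a character, as a submonoid of `L`. -/
def suppM (φ : Multiplicative M →* K) : AddSubmonoid L where
  carrier := {x | ∃ h : x ∈ M, φ (Multiplicative.ofAdd ⟨x, h⟩) ≠ 0}
  zero_mem' := ⟨M.zero_mem, by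
    have h1 : (Multiplicative.ofAdd (⟨0, M.zero_mem⟩ : M)) = 1 := rfl
    rw [h1, map_one]; exact one_ne_zero⟩
  add_mem' := by
    rintro a b ⟨ha, hpa⟩ ⟨hb, hpb⟩
    refine ⟨M.add_mem ha hb, ?_⟩
    have : (⟨a + b, M.add_mem ha hb⟩ : M) = ⟨a, ha⟩ + ⟨b, hb⟩ := rfl
    rw [this, phi_add]
    exact mul_ne_zero hpa hpb

lemma suppM_phi_eq_zero (φ : Multiplicative M →* K) {x : L} (hx : x ∈ M)
    (h : x ∉ suppM φ) : φ (Multiplicative.ofAdd ⟨x, hx⟩) = 0 := by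
  by_contra hne
  exact h ⟨hx, hne⟩

lemma suppM_isFace (φ : Multiplicative M →* K) : IsFace M (suppM φ) := by
  constructor
  · rintro x ⟨hx, -⟩; exact hx
  · rintro x hx hxF y hy ⟨hxy, hne⟩
    apply hne
    have : (⟨x + y, hxy⟩ : M) = ⟨x, hx⟩ + ⟨y, hy⟩ := rfl
    rw [this, phi_add, suppM_phi_eq_zero φ hx hxF, zero_mul]

/-- A face absorbs roots of its elements within `M`. -/
lemma face_of_nsmul {F : AddSubmonoid L} (hF : IsFace M F) {x : L} (hx : x ∈ M)
    {n : ℕ} (hn : 0 < n) (h : n • x ∈ F) : x ∈ F := by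
  by_contra hxF
  obtain ⟨k, rfl⟩ := Nat.exists_eq_add_of_lt hn
  have : (k + 1) • x = x + k • x := by rw [add_nsmul, one_nsmul, add_comm]
  rw [zero_add] at h
  rw [this] at h
  exact hF.2 x hx hxF (k • x) (AddSubmonoid.nsmul_mem M hx k) h

/-- The group generated by the support. -/
def suppG (φ : Multiplicative M →* K) : AddSubgroup L where
  carrier := {x | ∃ f, f ∈ suppM φ ∧ ∃ g, g ∈ suppM φ ∧ x = f - g}
  zero_mem' := ⟨0, (suppM φ).zero_mem, 0, (suppM φ).zero_mem, by simp⟩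
  add_mem' := by
    rintro a b ⟨f, hf, g, hg, rfl⟩ ⟨f', hf', g', hg', rfl⟩
    exact ⟨f + f', (suppM φ).add_mem hf hf', g + g', (suppM φ).add_mem hg hg', by abel⟩
  neg_mem' := by
    rintro a ⟨f, hf, g, hg, rfl⟩
    exact ⟨g, hg, f, hf, by abel⟩

lemma mem_suppG {φ : Multiplicative M →* K} {x : L} :
    x ∈ suppG φ ↔ ∃ f, f ∈ suppM φ ∧ ∃ g, g ∈ suppM φ ∧ x = f - g := Iff.rfl

lemma suppM_le_suppG {φ : Multiplicative M →* K} {x : L} (hx : x ∈ suppM φ) :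
    x ∈ suppG φ :=
  ⟨x, hx, 0, (suppM φ).zero_mem, by simp⟩

/-- Well-definedness of the extension of `φ` to the group generated by its support. -/
lemma well (φ : Multiplicative M →* K) {f g f' g' : L}
    (hf : f ∈ suppM φ) (hg : g ∈ suppM φ) (hf' : f' ∈ suppM φ) (hg' : g' ∈ suppM φ)
    (h : f - g = f' - g') :
    φ (Multiplicative.ofAdd ⟨f, hf.1⟩) * φ (Multiplicative.ofAdd ⟨g', hg'.1⟩) =
      φ (Multiplicative.ofAdd ⟨f', hf'.1⟩) * φ (Multiplicative.ofAdd ⟨g, hg.1⟩) := by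
  have hL : f + g' = f' + g := sub_eq_sub_iff_add_eq_add.mp h
  have hM' : (⟨f, hf.1⟩ : M) + ⟨g', hg'.1⟩ = ⟨f', hf'.1⟩ + ⟨g, hg.1⟩ :=
    Subtype.ext hL
  calc φ (Multiplicative.ofAdd ⟨f, hf.1⟩) * φ (Multiplicative.ofAdd ⟨g', hg'.1⟩)
      = φ (Multiplicative.ofAdd ((⟨f, hf.1⟩ : M) + ⟨g', hg'.1⟩)) := (phi_add φ _ _).symm
    _ = φ (Multiplicative.ofAdd ((⟨f', hf'.1⟩ : M) + ⟨g, hg.1⟩)) := by rw [hM']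
    _ = _ := phi_add φ _ _

/-- The extension of `φ` to the group generated by its support, via choice. -/
noncomputable def psi (φ : Multiplicative M →* K) (x : L) (hx : x ∈ suppG φ) : K :=
  φ (Multiplicative.ofAdd ⟨hx.choose, hx.choose_spec.1.1⟩) *
    (φ (Multiplicative.ofAdd ⟨hx.choose_spec.2.choose, hx.choose_spec.2.choose_spec.1.1⟩))⁻¹

lemma psi_spec (φ : Multiplicative M →* K) {x : L} (hx : x ∈ suppG φ)
    {f g : L} (hf : f ∈ suppM φ) (hg : g ∈ suppM φ) (hxe : x = f - g) :
    psi φ x hx = φ (Multiplicative.ofAdd ⟨f, hf.1⟩) *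
      (φ (Multiplicative.ofAdd ⟨g, hg.1⟩))⁻¹ := by
  have h1 := hx.choose_spec.1
  have h2 := hx.choose_spec.2.choose_spec.1
  have h3 : hx.choose - hx.choose_spec.2.choose = f - g := by
    rw [← hx.choose_spec.2.choose_spec.2, ← hxe]
  have hw := well φ h1 h2 hf hg h3
  have hgne : φ (Multiplicative.ofAdd (⟨g, hg.1⟩ : M)) ≠ 0 := hg.2
  have hgne' : φ (Multiplicative.ofAdd
      (⟨hx.choose_spec.2.choose, hx.choose_spec.2.choose_spec.1.1⟩ : M)) ≠ 0 := h2.2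
  unfold psi
  field_simp
  linear_combination hw

lemma psi_ne_zero (φ : Multiplicative M →* K) {x : L} (hx : x ∈ suppG φ) :
    psi φ x hx ≠ 0 := by
  obtain ⟨f, hf, g, hg, hxe⟩ := id hx
  rw [psi_spec φ _ hf hg hxe]
  exact mul_ne_zero hf.2 (inv_ne_zero hg.2)

lemma psi_add (φ : Multiplicative M →* K) {x y : L}
    (hx : x ∈ suppG φ) (hy : y ∈ suppG φ) (hxy : x + y ∈ suppG φ) :
    psi φ (x + y) hxy = psi φ x hx * psi φ y hy := by
  obtain ⟨f, hf, g, hg, hxe⟩ := id hx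
  obtain ⟨f', hf', g', hg', hye⟩ := id hy
  rw [psi_spec φ hx hf hg hxe, psi_spec φ hy hf' hg' hye,
    psi_spec φ hxy ((suppM φ).add_mem hf hf') ((suppM φ).add_mem hg hg')
      (by rw [hxe, hye]; abel)]
  have h1 : (⟨f + f', ((suppM φ).add_mem hf hf').1⟩ : M) = ⟨f, hf.1⟩ + ⟨f', hf'.1⟩ := rfl
  have h2 : (⟨g + g', ((suppM φ).add_mem hg hg').1⟩ : M) = ⟨g, hg.1⟩ + ⟨g', hg'.1⟩ := rfl
  rw [h1, h2, phi_add, phi_add, mul_inv]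
  ring

lemma psi_on_supp (φ : Multiplicative M →* K) {x : L} (hx : x ∈ suppM φ)
    (hx' : x ∈ suppG φ) :
    psi φ x hx' = φ (Multiplicative.ofAdd ⟨x, hx.1⟩) := by
  rw [psi_spec φ hx' hx (suppM φ).zero_mem (by simp)]
  have h0 : (Multiplicative.ofAdd (⟨0, ((suppM φ).zero_mem : (0:L) ∈ suppM φ).1⟩ : M)) = 1 := rfl
  rw [h0, map_one, inv_one, mul_one]

end Aux

/-- For a saturated submonoid `M` of a lattice of finite rank and an infinite field `K`,
consider the monoid `M̃ = Hom((M,+),(K,·))` under pointwise multiplication.  Then: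
(1) the unit group of `M̃` is `T(M) = {α : α⁻¹(Kˣ) = M}`, i.e. the nowhere vanishing
homomorphisms; (2) the idempotents of `M̃` are exactly the elements `e(F)` for `F` a face
of `M`, where `e(F)` is `1` on `F` and `0` on `M \ F`; (3) `M̃ = T(M) · E`. -/
theorem characters_of_saturated_monoid
    (L : Type) [AddCommGroup L] [Module.Free ℤ L] [Module.Finite ℤ L]
    (K : Type) [Field K] [Infinite K]
    (M : AddSubmonoid L) (hM : IsSaturated M) :
    (∀ φ : Multiplicative M →* K, IsUnit φ ↔ ∀ m : Multiplicative M, φ m ≠ 0) ∧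
    (∀ φ : Multiplicative M →* K, φ * φ = φ ↔
      ∃ F : AddSubmonoid L, IsFace M F ∧
        ∀ m : M, ((m : L) ∈ F → φ (Multiplicative.ofAdd m) = 1) ∧
          ((m : L) ∉ F → φ (Multiplicative.ofAdd m) = 0)) ∧
    (∀ φ : Multiplicative M →* K, ∃ u e : Multiplicative M →* K,
      IsUnit u ∧ e * e = e ∧ φ = u * e) := by
  have part1 : ∀ φ : Multiplicative M →* K, IsUnit φ ↔ ∀ m : Multiplicative M, φ m ≠ 0 := by
    intro φ
    constructor
    · intro hu m h0
      obtain ⟨ψ, hψ⟩ := isUnit_iff_exists.mp hu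
      have h1 := DFunLike.congr_fun hψ.1 m
      rw [MonoidHom.mul_apply, MonoidHom.one_apply, h0, zero_mul] at h1
      exact zero_ne_one h1
    · intro h
      refine isUnit_iff_exists.mpr ⟨⟨⟨fun m => (φ m)⁻¹, by
        show (φ 1)⁻¹ = 1
        rw [map_one, inv_one]⟩,
        fun a b => by
          show (φ (a * b))⁻¹ = (φ a)⁻¹ * (φ b)⁻¹
          rw [map_mul, mul_inv]⟩, ?_, ?_⟩ <;>
      · refine MonoidHom.ext fun m => ?_
        simp only [MonoidHom.mul_apply, MonoidHom.coe_mk, OneHom.coe_mk, MonoidHom.one_apply]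
        first
        | exact mul_inv_cancel₀ (h m)
        | exact inv_mul_cancel₀ (h m)
  refine ⟨part1, ?_, ?_⟩
  · -- part 2
    intro φ
    constructor
    · intro hφ
      refine ⟨suppM φ, suppM_isFace φ, fun m => ⟨?_, ?_⟩⟩
      · rintro ⟨hm, hne⟩
        have hmm : (⟨(m : L), hm⟩ : M) = m := Subtype.ext rfl
        rw [hmm] at hne
        have h1 : φ (Multiplicative.ofAdd m) * φ (Multiplicative.ofAdd m)
            = φ (Multiplicative.ofAdd m) := by
          conv_rhs => rw [← hφ]
          rfl
        have := mul_left_cancel₀ hne (h1.trans (mul_one _).symm)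
        exact this
      · intro hm
        have := suppM_phi_eq_zero φ m.2 hm
        have hmm : (⟨(m : L), m.2⟩ : M) = m := Subtype.ext rfl
        rwa [hmm] at this
    · rintro ⟨F, hF, h⟩
      refine MonoidHom.ext fun m => ?_
      obtain ⟨n, rfl⟩ : ∃ n : M, Multiplicative.ofAdd n = m := ⟨Multiplicative.toAdd m, rfl⟩
      rw [MonoidHom.mul_apply]
      by_cases hn : (n : L) ∈ F
      · rw [(h n).1 hn]; simp
      · rw [(h n).2 hn]; simp
  · -- part 3
    intro φ
    classical
    -- the pure subgroup generated by the support
    set G : AddSubgroup L := suppG φ with hG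
    have hpure : ∀ (n : ℤ) (x : L), n ≠ 0 → n • x ∈ G → x ∈ G := by
      have hnat : ∀ (n : ℕ) (x : L), 0 < n → n • x ∈ G → x ∈ G := by
        intro n x hn hx
        obtain ⟨f, hf, g, hg, he⟩ := hx
        have hxg : n • (x + g) = f + (n - 1) • g := by
          have : n • x = f - g := he
          rw [smul_add, this]
          rw [← Nat.succ_pred_eq_of_pos hn]
          simp only [Nat.succ_sub_one]
          rw [succ_nsmul]
          abel
        have hmem : n • (x + g) ∈ suppM φ := by
          rw [hxg]
          exact (suppM φ).add_mem hf (AddSubmonoid.nsmul_mem _ hg _)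
        have hMxg : x + g ∈ M := hM (x + g) n hn ((suppM_isFace φ).1 hmem)
        have hFxg : x + g ∈ suppM φ := face_of_nsmul (suppM_isFace φ) hMxg hn hmem
        have : x = (x + g) - g := by abel
        rw [this]
        exact G.sub_mem (suppM_le_suppG hFxg) (suppM_le_suppG hg)
      intro n x hn hx
      rcases lt_or_gt_of_ne hn with h | h
      · have : (-n).toNat • x = (-n) • x := by
          rw [← natCast_zsmul, Int.toNat_of_nonneg (by omega)]
        apply hnat (-n).toNat x (by omega)
        rw [this, neg_zsmul]
        exact G.neg_mem hx
      · have : n.toNat • x = n • x := by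
          rw [← natCast_zsmul, Int.toNat_of_nonneg (by omega)]
        apply hnat n.toNat x (by omega)
        rw [this]; exact hx
    set G' : Submodule ℤ L := AddSubgroup.toIntSubmodule G with hG'
    have hmemG' : ∀ x : L, x ∈ G' ↔ x ∈ G := fun x => Iff.rfl
    haveI : NoZeroSMulDivisors ℤ (L ⧸ G') := by
      refine ⟨fun {n x} h => ?_⟩
      rcases eq_or_ne n 0 with h0 | h0
      · exact Or.inl h0
      right
      obtain ⟨y, rfl⟩ := Submodule.Quotient.mk_surjective G' x
      rw [← Submodule.Quotient.mk_smul, Submodule.Quotient.mk_eq_zero] at h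
      rw [Submodule.Quotient.mk_eq_zero]
      exact hpure n y h0 h
    haveI : Module.Free ℤ (L ⧸ G') := Module.free_of_finite_type_torsion_free'
    obtain ⟨s, hs⟩ := Module.projective_lifting_property G'.mkQ LinearMap.id
      (Submodule.mkQ_surjective G')
    set π : L →ₗ[ℤ] L := LinearMap.id - s ∘ₗ G'.mkQ with hπ
    have hπmem : ∀ x : L, π x ∈ G := by
      intro x
      have : G'.mkQ (π x) = 0 := by
        simp only [hπ, LinearMap.sub_apply, LinearMap.id_apply, LinearMap.comp_apply, map_sub]
        have := LinearMap.congr_fun hs (G'.mkQ x)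
        simp only [LinearMap.comp_apply, LinearMap.id_apply] at this
        rw [this, sub_self]
      rw [Submodule.mkQ_apply, Submodule.Quotient.mk_eq_zero] at this
      exact this
    have hπfix : ∀ x : L, x ∈ G → π x = x := by
      intro x hx
      have hx' : G'.mkQ x = 0 := by rwa [Submodule.mkQ_apply, Submodule.Quotient.mk_eq_zero]
      simp only [hπ, LinearMap.sub_apply, LinearMap.id_apply, LinearMap.comp_apply, hx',
        map_zero, sub_zero]
    -- the unit part
    refine ⟨⟨⟨fun m => psi φ (π ((Multiplicative.toAdd m : M) : L)) (hπmem _), ?_⟩, ?_⟩,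
      ⟨⟨fun m => if ((Multiplicative.toAdd m : M) : L) ∈ suppM φ then 1 else 0, ?_⟩, ?_⟩,
      ?_, ?_, ?_⟩
    · -- u maps 1 to 1
      show psi φ (π ((0 : L))) _ = 1
      have h0 : π (0 : L) = 0 := map_zero π
      rw [psi_spec φ _ (suppM φ).zero_mem (suppM φ).zero_mem (by rw [h0]; simp)]
      have h1 : (Multiplicative.ofAdd
          (⟨(0:L), ((suppM φ).zero_mem : (0:L) ∈ suppM φ).1⟩ : M)) = 1 := rfl
      rw [h1, map_one, inv_one, mul_one]
    · -- u multiplicative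
      intro a b
      set x : L := ((Multiplicative.toAdd a : M) : L) with hx
      set y : L := ((Multiplicative.toAdd b : M) : L) with hy
      show psi φ (π ((Multiplicative.toAdd (a * b) : M) : L)) (hπmem _) =
        psi φ (π x) (hπmem _) * psi φ (π y) (hπmem _)
      have hab : ((Multiplicative.toAdd (a * b) : M) : L) = x + y := rfl
      have key := psi_add φ (hπmem x) (hπmem y)
        (hxy := show π x + π y ∈ G by rw [← map_add]; exact hπmem _)
      calc psi φ (π ((Multiplicative.toAdd (a * b) : M) : L)) (hπmem _)
          = psi φ (π x + π y) (by rw [← map_add]; exact hπmem _) := by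
            congr 1 <;> rw [hab, map_add]
        _ = _ := key
    · -- e maps 1 to 1
      show (if ((0:L) ∈ suppM φ) then (1:K) else 0) = 1
      rw [if_pos (suppM φ).zero_mem]
    · -- e multiplicative
      intro a b
      set x : L := ((Multiplicative.toAdd a : M) : L) with hx
      set y : L := ((Multiplicative.toAdd b : M) : L) with hy
      show (if ((Multiplicative.toAdd (a * b) : M) : L) ∈ suppM φ then (1:K) else 0) =
        (if x ∈ suppM φ then (1:K) else 0) * (if y ∈ suppM φ then (1:K) else 0)
      have hab : ((Multiplicative.toAdd (a * b) : M) : L) = x + y := rfl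
      rw [hab]
      by_cases ha : x ∈ suppM φ
      · by_cases hb : y ∈ suppM φ
        · rw [if_pos ((suppM φ).add_mem ha hb), if_pos ha, if_pos hb, one_mul]
        · rw [if_neg, if_pos ha, if_neg hb, one_mul]
          intro h
          exact (suppM_isFace φ).2 _ (Multiplicative.toAdd b : M).2 hb _
            (Multiplicative.toAdd a : M).2 (by rwa [add_comm] at h)
      · rw [if_neg, if_neg ha, zero_mul]
        exact (suppM_isFace φ).2 _ (Multiplicative.toAdd a : M).2 ha _
          (Multiplicative.toAdd b : M).2
    · -- u is a unit
      rw [part1]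
      intro m
      exact psi_ne_zero φ (hπmem _)
    · -- e idempotent
      ext m
      set x : L := ((Multiplicative.toAdd m : M) : L) with hx
      show (if x ∈ suppM φ then (1:K) else 0) * (if x ∈ suppM φ then (1:K) else 0) =
        (if x ∈ suppM φ then (1:K) else 0)
      by_cases hm : x ∈ suppM φ <;> simp [hm]
    · -- φ = u * e
      ext m
      obtain ⟨n, rfl⟩ : ∃ n : M, Multiplicative.ofAdd n = m := ⟨Multiplicative.toAdd m, rfl⟩
      show φ (Multiplicative.ofAdd n) = psi φ (π ((n : M) : L)) _ *
        (if ((n : M) : L) ∈ suppM φ then (1:K) else 0)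
      by_cases hn : (n : L) ∈ suppM φ
      · rw [if_pos hn, mul_one]
        have hfix : π ((n : M) : L) = ((n : M) : L) := hπfix _ (suppM_le_suppG hn)
        have h1 : psi φ (π ((n : M) : L)) (hπmem _) =
            psi φ ((n : M) : L) (suppM_le_suppG hn) := by congr 1
        rw [h1, psi_on_supp φ hn]
      · rw [if_neg hn, mul_zero]
        have := suppM_phi_eq_zero φ n.2 hn
        have hmm : (⟨((n : M) : L), n.2⟩ : M) = n := Subtype.ext rfl
        rwa [hmm] at this
end

section
/- Let M be a saturated submonoid of a lattice of finite rank and K an infinite field. For each face F of M, the set T(F) := {α ∈ M̃ : α⁻¹(K^×) = F} is a group under pointwise multiplication with identity e(F), and the map Φ_F from Hom(F−F, K^×) to T(F) sending α to the extension by zero (Φ_F(α)(m) = α(m) for m ∈ F, and 0 for m ∈ M \ F) is a group isomorphism. -/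
section Aux

variable {L : Type} [AddCommGroup L] {K : Type} [Field K]

lemma mem_closure_iff_sub {F : AddSubmonoid L} {x : L} :
    x ∈ AddSubgroup.closure (F : Set L) ↔ ∃ a ∈ F, ∃ b ∈ F, x = a - b := by
  constructor
  · intro hx
    induction hx using AddSubgroup.closure_induction with
    | mem a ha => exact ⟨a, ha, 0, zero_mem _, by simp⟩
    | zero => exact ⟨0, zero_mem _, 0, zero_mem _, by simp⟩
    | add x y hx hy ihx ihy =>
      obtain ⟨a, ha, b, hb, rfl⟩ := ihx
      obtain ⟨c, hc, d, hd, rfl⟩ := ihy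
      exact ⟨a + c, add_mem ha hc, b + d, add_mem hb hd, by abel⟩
    | neg x hx ihx =>
      obtain ⟨a, ha, b, hb, rfl⟩ := ihx
      exact ⟨b, hb, a, ha, by abel⟩
  · rintro ⟨a, ha, b, hb, rfl⟩
    exact sub_mem (AddSubgroup.subset_closure ha) (AddSubgroup.subset_closure hb)

lemma face_add {M F : AddSubmonoid L} (hF : IsFace M F) {m n : L}
    (hm : m ∈ M) (hn : n ∈ M) : m + n ∈ F ↔ m ∈ F ∧ n ∈ F := by
  constructor
  · intro h
    constructor
    · by_contra hmF; exact hF.2 m hm hmF n hn h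
    · by_contra hnF; exact hF.2 n hn hnF m hm (by rwa [add_comm])
  · rintro ⟨h1, h2⟩; exact add_mem h1 h2

open Classical in
/-- Extension by zero of a character on `F - F` to `M`. -/
noncomputable def extHom {M F : AddSubmonoid L} (hF : IsFace M F)
    (α : Multiplicative (AddSubgroup.closure (F : Set L)) →* Kˣ) :
    Multiplicative M →* K where
  toFun m := if h : ((Multiplicative.toAdd m : M) : L) ∈ F
    then (α (Multiplicative.ofAdd ⟨((Multiplicative.toAdd m : M) : L),
        AddSubgroup.subset_closure h⟩) : K)
    else 0
  map_one' := by
    have h0 : ((Multiplicative.toAdd (1 : Multiplicative M) : M) : L) ∈ F := zero_mem F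
    rw [dif_pos h0]
    have : (Multiplicative.ofAdd (⟨((Multiplicative.toAdd (1 : Multiplicative M) : M) : L),
        AddSubgroup.subset_closure (zero_mem F)⟩ : AddSubgroup.closure (F : Set L)))
        = (1 : Multiplicative (AddSubgroup.closure (F : Set L))) := rfl
    rw [this, map_one, Units.val_one]
  map_mul' x y := by
    by_cases hx : ((Multiplicative.toAdd x : M) : L) ∈ F
    · by_cases hy : ((Multiplicative.toAdd y : M) : L) ∈ F
      · have hxy : ((Multiplicative.toAdd (x * y) : M) : L) ∈ F := add_mem hx hy
        rw [dif_pos hxy, dif_pos hx, dif_pos hy, ← Units.val_mul, ← map_mul]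
        rfl
      · have hxy : ((Multiplicative.toAdd (x * y) : M) : L) ∉ F := fun h =>
          hy ((face_add hF (Multiplicative.toAdd x : M).2 (Multiplicative.toAdd y : M).2).mp h).2
        rw [dif_neg hxy, dif_neg hy, mul_zero]
    · have hxy : ((Multiplicative.toAdd (x * y) : M) : L) ∉ F := fun h =>
        hx ((face_add hF (Multiplicative.toAdd x : M).2 (Multiplicative.toAdd y : M).2).mp h).1
      rw [dif_neg hxy, dif_neg hx, zero_mul]

lemma extHom_pos {M F : AddSubmonoid L} (hF : IsFace M F)
    (α : Multiplicative (AddSubgroup.closure (F : Set L)) →* Kˣ) (m : M)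
    (h : (m : L) ∈ F) :
    extHom hF α (Multiplicative.ofAdd m)
      = (α (Multiplicative.ofAdd ⟨(m : L), AddSubgroup.subset_closure h⟩) : K) :=
  dif_pos h

lemma extHom_neg {M F : AddSubmonoid L} (hF : IsFace M F)
    (α : Multiplicative (AddSubgroup.closure (F : Set L)) →* Kˣ) (m : M)
    (h : (m : L) ∉ F) :
    extHom hF α (Multiplicative.ofAdd m) = 0 :=
  dif_neg h

end Aux

section Aux2
variable {L : Type} [AddCommGroup L] {K : Type} [Field K]

lemma extHom_injective {M F : AddSubmonoid L} (hF : IsFace M F) :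
    Function.Injective (extHom (K := K) (M := M) (F := F) hF) := by
  intro α β h
  apply MonoidHom.ext
  intro x
  obtain ⟨a, ha, b, hb, hab⟩ := mem_closure_iff_sub.mp (Multiplicative.toAdd x).2
  set ga : AddSubgroup.closure (F : Set L) := ⟨a, AddSubgroup.subset_closure ha⟩
  set gb : AddSubgroup.closure (F : Set L) := ⟨b, AddSubgroup.subset_closure hb⟩
  have hx : x = Multiplicative.ofAdd ga / Multiplicative.ofAdd gb := by
    have : (Multiplicative.toAdd x) = ga - gb := Subtype.ext hab
    rw [show x = Multiplicative.ofAdd (Multiplicative.toAdd x) from rfl, this, ofAdd_sub]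
  have key : ∀ (c : L) (hc : c ∈ F),
      α (Multiplicative.ofAdd ⟨c, AddSubgroup.subset_closure hc⟩)
        = β (Multiplicative.ofAdd ⟨c, AddSubgroup.subset_closure hc⟩) := by
    intro c hc
    apply Units.ext
    have h1 := extHom_pos (K := K) hF α (⟨c, hF.1 hc⟩ : M) hc
    have h2 := extHom_pos (K := K) hF β (⟨c, hF.1 hc⟩ : M) hc
    rw [← h1, ← h2, h]
  rw [hx, map_div, map_div, key a ha, key b hb]

lemma extHom_surj {M F : AddSubmonoid L} (hF : IsFace M F) (φ : Multiplicative M →* K)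
    (hφ : ∀ m : M, φ (Multiplicative.ofAdd m) ≠ 0 ↔ (m : L) ∈ F) :
    ∃ α, extHom (K := K) hF α = φ := by
  have hphi_add : ∀ m n : M, φ (Multiplicative.ofAdd (m + n))
      = φ (Multiplicative.ofAdd m) * φ (Multiplicative.ofAdd n) := fun m n => by
    rw [ofAdd_add, map_mul]
  set u : F → Kˣ := fun a =>
    Units.mk0 (φ (Multiplicative.ofAdd ⟨a.1, hF.1 a.2⟩)) ((hφ ⟨a.1, hF.1 a.2⟩).mpr a.2) with hu
  have humul : ∀ a b : F, u (a + b) = u a * u b := by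
    intro a b
    exact Units.ext (hphi_add ⟨a.1, hF.1 a.2⟩ ⟨b.1, hF.1 b.2⟩)
  have hu0 : u 0 = 1 := Units.ext (map_one φ)
  have hdec : ∀ x : AddSubgroup.closure (F : Set L), ∃ a ∈ F, ∃ b ∈ F, (x : L) = a - b :=
    fun x => mem_closure_iff_sub.mp x.2
  choose A hA B hB hAB using hdec
  set v : AddSubgroup.closure (F : Set L) → Kˣ :=
    fun x => u ⟨A x, hA x⟩ / u ⟨B x, hB x⟩ with hvdef
  have hv : ∀ (x : AddSubgroup.closure (F : Set L)) (c d : F), (x : L) = c - d →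
      v x = u c / u d := by
    intro x c d hcd
    have h1 : A x + (d : L) = c + B x :=
      sub_eq_sub_iff_add_eq_add.mp ((hAB x).symm.trans hcd)
    have h2 : u (⟨A x, hA x⟩ + d) = u (c + ⟨B x, hB x⟩) := congrArg u (Subtype.ext h1)
    rw [humul, humul] at h2
    exact div_eq_div_iff_mul_eq_mul.mpr h2
  set α : Multiplicative (AddSubgroup.closure (F : Set L)) →* Kˣ :=
    { toFun := fun x => v (Multiplicative.toAdd x)
      map_one' := by
        show v 0 = 1
        rw [hv 0 0 0 (by simp), div_self']
      map_mul' := by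
        intro x y
        show v (Multiplicative.toAdd x + Multiplicative.toAdd y) = _
        set p := Multiplicative.toAdd x
        set q := Multiplicative.toAdd y
        have hsum : ((p + q : AddSubgroup.closure (F : Set L)) : L)
            = ((⟨A p, hA p⟩ + ⟨A q, hA q⟩ : F) : L) - ((⟨B p, hB p⟩ + ⟨B q, hB q⟩ : F) : L) := by
          push_cast
          rw [hAB p, hAB q]; abel
        have hmul := hv (p + q) _ _ hsum
        rw [humul, humul] at hmul
        rw [hmul]
        show _ = (u ⟨A p, hA p⟩ / u ⟨B p, hB p⟩) * (u ⟨A q, hA q⟩ / u ⟨B q, hB q⟩)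
        rw [div_mul_div_comm] } with hα
  refine ⟨α, ?_⟩
  apply MonoidHom.ext
  intro x
  set m := Multiplicative.toAdd x with hm
  by_cases h : (m : L) ∈ F
  · have e1 : extHom hF α x
        = (α (Multiplicative.ofAdd ⟨(m : L), AddSubgroup.subset_closure h⟩) : K) := dif_pos h
    have e2 : α (Multiplicative.ofAdd ⟨(m : L), AddSubgroup.subset_closure h⟩)
        = v ⟨(m : L), AddSubgroup.subset_closure h⟩ := rfl
    rw [e1, e2, hv _ ⟨(m : L), h⟩ 0 (by simp), hu0, div_one]
    show φ (Multiplicative.ofAdd ⟨(m : L), hF.1 h⟩) = φ x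
    congr 1
  · have e1 : extHom hF α x = (0 : K) := dif_neg h
    rw [e1]
    exact (not_not.mp (fun hne => h ((hφ m).mp hne))).symm

end Aux2

/-- For a face `F` of a saturated submonoid `M` of a lattice of finite rank and an
infinite field `K`, the set `T(F) = {α ∈ M̃ : α⁻¹(Kˣ) = F}` is a group under pointwise
multiplication with identity `e(F)`, and extension by zero gives a group isomorphism
`Φ_F : Hom(F − F, Kˣ) → T(F)`. -/
theorem torus_orbit_of_face
    (L : Type) [AddCommGroup L] [Module.Free ℤ L] [Module.Finite ℤ L]
    (K : Type) [Field K] [Infinite K]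
    (M : AddSubmonoid L) (hM : IsSaturated M)
    (F : AddSubmonoid L) (hF : IsFace M F) :
    let TF : Set (Multiplicative M →* K) :=
      {φ | ∀ m : M, φ (Multiplicative.ofAdd m) ≠ 0 ↔ (m : L) ∈ F}
    ∃ Φ : (Multiplicative (AddSubgroup.closure (F : Set L)) →* Kˣ) → (Multiplicative M →* K),
      (∀ α, ∀ m : M,
        (∀ h : (m : L) ∈ F,
          Φ α (Multiplicative.ofAdd m) =
            (α (Multiplicative.ofAdd ⟨(m : L), AddSubgroup.subset_closure h⟩) : K)) ∧
        ((m : L) ∉ F → Φ α (Multiplicative.ofAdd m) = 0)) ∧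
      (∀ α β, Φ (α * β) = Φ α * Φ β) ∧
      Function.Injective Φ ∧
      Set.range Φ = TF ∧
      (∀ φ ∈ TF, Φ 1 * φ = φ ∧ φ * Φ 1 = φ) ∧
      (∀ φ ∈ TF, ∃ ψ ∈ TF, φ * ψ = Φ 1) := by
  intro TF
  have hmul : ∀ α β, extHom (K := K) hF (α * β) = extHom hF α * extHom hF β := by
    intro α β
    apply MonoidHom.ext
    intro x
    set m := Multiplicative.toAdd x with hm
    by_cases h : (m : L) ∈ F
    · have e1 : extHom hF (α * β) x
          = ((α * β) (Multiplicative.ofAdd ⟨(m : L), AddSubgroup.subset_closure h⟩) : K) :=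
        dif_pos h
      have e2 : extHom hF α x
          = (α (Multiplicative.ofAdd ⟨(m : L), AddSubgroup.subset_closure h⟩) : K) := dif_pos h
      have e3 : extHom hF β x
          = (β (Multiplicative.ofAdd ⟨(m : L), AddSubgroup.subset_closure h⟩) : K) := dif_pos h
      show extHom hF (α * β) x = extHom hF α x * extHom hF β x
      rw [e1, e2, e3, MonoidHom.mul_apply, Units.val_mul]
    · have e1 : extHom hF (α * β) x = (0 : K) := dif_neg h
      have e2 : extHom hF α x = (0 : K) := dif_neg h
      show extHom hF (α * β) x = extHom hF α x * extHom hF β x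
      rw [e1, e2, zero_mul]
  have hrange : Set.range (extHom (K := K) hF) = TF := by
    ext φ
    constructor
    · rintro ⟨α, rfl⟩
      intro m
      constructor
      · intro hne
        by_contra hm
        exact hne (extHom_neg hF α m hm)
      · intro hm
        rw [extHom_pos hF α m hm]
        exact Units.ne_zero _
    · intro hφ
      exact extHom_surj hF φ hφ
  have hone : ∀ m : M, (m : L) ∈ F → extHom (K := K) hF 1 (Multiplicative.ofAdd m) = 1 := by
    intro m h
    rw [extHom_pos hF 1 m h]
    rfl
  have hTFzero : ∀ φ ∈ TF, ∀ m : M, (m : L) ∉ F → φ (Multiplicative.ofAdd m) = 0 :=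
    fun φ hφ m hm => not_not.mp (fun hne => hm ((hφ m).mp hne))
  refine ⟨extHom hF, fun α m => ⟨fun h => extHom_pos hF α m h, extHom_neg hF α m⟩, hmul,
    extHom_injective hF, hrange, ?_, ?_⟩
  · intro φ hφ
    constructor <;>
    · apply MonoidHom.ext
      intro x
      set m := Multiplicative.toAdd x with hm
      by_cases h : (m : L) ∈ F
      · show _ = φ x
        rw [MonoidHom.mul_apply]
        have := hone m h
        first
        | rw [show extHom (K := K) hF 1 x = 1 from this, one_mul]
        | rw [show extHom (K := K) hF 1 x = 1 from this, mul_one]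
      · have h0 : φ x = 0 := hTFzero φ hφ m h
        show _ = φ x
        rw [MonoidHom.mul_apply, h0]
        simp
  · intro φ hφ
    obtain ⟨α, rfl⟩ : φ ∈ Set.range (extHom (K := K) hF) := hrange ▸ hφ
    refine ⟨extHom hF α⁻¹, hrange ▸ Set.mem_range_self _, ?_⟩
    rw [← hmul]; congr 1; exact mul_inv_cancel α
end

section
/- Let R = τR(Θ) be a face of the Tits cone and let α ∈ Δ_re be a real root with α ∉ span(R). If μ ∈ R ∩ P is a weight with μ(h_α) = 0, then the α-string through μ inside X ∩ P is just {μ}; more generally, (μ + ℤα) ∩ X = {μ, μ−α, …, μ−μ(h_α)α} if μ(h_α) > 0, {μ} if μ(h_α) = 0, and {μ, μ+α, …, μ−μ(h_α)α} if μ(h_α) < 0. -/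
/-- Root strings through a weight in a face of the Tits cone.

`X` is the Tits cone (a `W`-invariant convex cone), `R` a face of `X`, `α` a real root
with coroot pairing `f` (so `f v = v(h_α)` and the reflection is `σ_α v = v - f v • α`),
and `α ∉ span R`.  For `μ ∈ R` with `μ(h_α) = m ∈ ℤ`, the α-string `(μ + ℤα) ∩ X` is
`{μ, μ−α, …, μ−mα}` if `m > 0`, `{μ}` if `m = 0`, and `{μ, μ+α, …, μ−mα}` if `m < 0`. -/
theorem root_string_through_face
    (V : Type) [AddCommGroup V] [Module ℝ V]
    (X R : Set V) (f : V →ₗ[ℝ] ℝ) (α : V)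
    (hXconv : Convex ℝ X)
    (hXcone : ∀ (c : ℝ), 0 ≤ c → ∀ x ∈ X, c • x ∈ X)
    (hXrefl : ∀ v ∈ X, v - f v • α ∈ X)
    (hfα : f α = 2)
    (hRX : R ⊆ X)
    (hRface : ∀ x ∈ X, ∀ y ∈ X, x + y ∈ R → x ∈ R)
    (hRcone : ∀ (c : ℝ), 0 ≤ c → ∀ x ∈ R, c • x ∈ R)
    (hα : α ∉ Submodule.span ℝ R)
    (μ : V) (hμ : μ ∈ R) (m : ℤ) (hm : f μ = (m : ℝ)) :
    ∀ z : ℤ, μ + z • α ∈ X ↔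
      (z = 0 ∨ (0 < m ∧ -m ≤ z ∧ z ≤ 0) ∨ (m < 0 ∧ 0 ≤ z ∧ z ≤ -m)) := by
  intro z
  have hzs : (z : ℝ) • α = z • α := Int.cast_smul_eq_zsmul ℝ z α
  constructor
  · intro hx
    by_contra hcon
    have key : (z < 0 ∧ m + z < 0) ∨ (0 < z ∧ 0 < m + z) := by omega
    have hz0 : (z : ℝ) ≠ 0 := by
      have : z ≠ 0 := by omega
      exact_mod_cast this
    -- the denominator
    set s : ℝ := (m : ℝ) + 2 * z with hs
    have hs0 : s ≠ 0 := by
      rcases key with ⟨h1, h2⟩ | ⟨h1, h2⟩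
      · have : (m : ℝ) + 2 * z < 0 := by
          have : m + 2 * z < 0 := by omega
          exact_mod_cast this
        linarith [this]
      · have : (0 : ℝ) < (m : ℝ) + 2 * z := by
          have : 0 < m + 2 * z := by omega
          exact_mod_cast this
        linarith [this]
    set a : ℝ := ((m : ℝ) + z) / s with hadef
    set b : ℝ := (z : ℝ) / s with hbdef
    have ha : 0 < a := by
      rcases key with ⟨h1, h2⟩ | ⟨h1, h2⟩
      · apply div_pos_of_neg_of_neg
        · exact_mod_cast (by exact_mod_cast h2 : ((m + z : ℤ) : ℝ) < 0)
        · have : ((m + 2 * z : ℤ) : ℝ) < 0 := by exact_mod_cast (by omega : m + 2 * z < 0)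
          push_cast at this; linarith
      · apply div_pos
        · exact_mod_cast (by exact_mod_cast h2 : (0:ℝ) < ((m + z : ℤ) : ℝ))
        · have : (0:ℝ) < ((m + 2 * z : ℤ) : ℝ) := by exact_mod_cast (by omega : 0 < m + 2 * z)
          push_cast at this; linarith
    have hb : 0 < b := by
      rcases key with ⟨h1, h2⟩ | ⟨h1, h2⟩
      · apply div_pos_of_neg_of_neg
        · exact_mod_cast h1
        · have : ((m + 2 * z : ℤ) : ℝ) < 0 := by exact_mod_cast (by omega : m + 2 * z < 0)
          push_cast at this; linarith
      · apply div_pos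
        · exact_mod_cast h1
        · have : (0:ℝ) < ((m + 2 * z : ℤ) : ℝ) := by exact_mod_cast (by omega : 0 < m + 2 * z)
          push_cast at this; linarith
    -- x and its reflection y are in X
    have hx' : μ + (z : ℝ) • α ∈ X := by rw [hzs]; exact hx
    have hfx : f (μ + (z : ℝ) • α) = s := by
      simp [map_add, map_smul, hfα, hm, hs]; ring
    have hy : μ + (z : ℝ) • α - f (μ + (z : ℝ) • α) • α ∈ X := hXrefl _ hx'
    rw [hfx] at hy
    have hyeq : μ + (z : ℝ) • α - s • α = μ - ((m : ℝ) + z) • α := by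
      rw [hs]; module
    rw [hyeq] at hy
    -- scaled elements
    have hax : a • (μ + (z : ℝ) • α) ∈ X := hXcone a ha.le _ hx'
    have hby : b • (μ - ((m : ℝ) + z) • α) ∈ X := hXcone b hb.le _ hy
    have hsum : a • (μ + (z : ℝ) • α) + b • (μ - ((m : ℝ) + z) • α) = μ := by
      have hab : a + b = 1 := by
        rw [hadef, hbdef, ← add_div, div_eq_one_iff_eq hs0, hs]; ring
      have habz : a * (z : ℝ) - b * ((m : ℝ) + z) = 0 := by
        rw [hadef, hbdef]; field_simp; ring
      have expand : a • (μ + (z : ℝ) • α) + b • (μ - ((m : ℝ) + z) • α)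
          = (a + b) • μ + (a * (z : ℝ) - b * ((m : ℝ) + z)) • α := by module
      rw [expand, hab, habz, one_smul, zero_smul, add_zero]
    have haxR : a • (μ + (z : ℝ) • α) ∈ R := by
      apply hRface _ hax _ hby
      rw [hsum]; exact hμ
    have hxR : μ + (z : ℝ) • α ∈ R := by
      have := hRcone a⁻¹ (inv_nonneg.mpr ha.le) _ haxR
      rwa [inv_smul_smul₀ ha.ne'] at this
    -- α is in the span of R, contradiction
    apply hα
    have h1 : (μ + (z : ℝ) • α) - μ ∈ Submodule.span ℝ R :=
      sub_mem (Submodule.subset_span hxR) (Submodule.subset_span hμ)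
    have h2 : (z : ℝ) • α ∈ Submodule.span ℝ R := by
      simpa using h1
    have := Submodule.smul_mem _ ((z : ℝ))⁻¹ h2
    rwa [inv_smul_smul₀ hz0] at this
  · intro h
    rcases h with h0 | ⟨hm1, hm2, hm3⟩ | ⟨hm1, hm2, hm3⟩
    · subst h0; simpa using hRX hμ
    · -- m > 0, -m ≤ z ≤ 0
      have hmR : (0:ℝ) < (m:ℝ) := by exact_mod_cast hm1
      set t : ℝ := -(z : ℝ) / (m : ℝ) with ht
      have ht0 : 0 ≤ t := by
        apply div_nonneg _ hmR.le
        have : (z:ℝ) ≤ 0 := by exact_mod_cast hm3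
        linarith
      have ht1 : t ≤ 1 := by
        rw [ht, div_le_one hmR]
        have : (-z : ℝ) ≤ (m : ℝ) := by exact_mod_cast (by omega : -z ≤ m)
        push_cast at this ⊢; linarith
      have hμX : μ ∈ X := hRX hμ
      have hσμ : μ - (m : ℝ) • α ∈ X := by
        have := hXrefl μ hμX
        rwa [hm] at this
      have hcomb := hXconv hμX hσμ (by linarith : (0:ℝ) ≤ 1 - t) ht0 (by ring)
      have htm : t * (m : ℝ) = -(z : ℝ) := by
        have hm0 : (m : ℝ) ≠ 0 := by linarith
        rw [ht]; field_simp
      have heq : (1 - t) • μ + t • (μ - (m : ℝ) • α) = μ + (z : ℝ) • α := by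
        have expand : (1 - t) • μ + t • (μ - (m : ℝ) • α) = μ - (t * (m : ℝ)) • α := by
          module
        rw [expand, htm]; module
      rw [heq] at hcomb
      rwa [hzs] at hcomb
    · -- m < 0, 0 ≤ z ≤ -m
      have hmR : (0:ℝ) < -(m:ℝ) := by
        have : (m:ℝ) < 0 := by exact_mod_cast hm1
        linarith
      set t : ℝ := -(z : ℝ) / (m : ℝ) with ht
      have ht' : t = (z : ℝ) / (-(m : ℝ)) := by rw [ht]; ring
      have ht0 : 0 ≤ t := by
        rw [ht']
        apply div_nonneg _ hmR.le
        exact_mod_cast hm2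
      have ht1 : t ≤ 1 := by
        rw [ht', div_le_one hmR]
        have : (z : ℝ) ≤ (-m : ℝ) := by exact_mod_cast hm3
        push_cast at this ⊢; linarith
      have hμX : μ ∈ X := hRX hμ
      have hσμ : μ - (m : ℝ) • α ∈ X := by
        have := hXrefl μ hμX
        rwa [hm] at this
      have hcomb := hXconv hμX hσμ (by linarith : (0:ℝ) ≤ 1 - t) ht0 (by ring)
      have htm : t * (m : ℝ) = -(z : ℝ) := by
        have hm0 : (m : ℝ) ≠ 0 := by linarith
        rw [ht]; field_simp
      have heq : (1 - t) • μ + t • (μ - (m : ℝ) • α) = μ + (z : ℝ) • α := by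
        have expand : (1 - t) • μ + t • (μ - (m : ℝ) • α) = μ - (t * (m : ℝ)) • α := by
          module
        rw [expand, htm]; module
      rw [heq] at hcomb
      rwa [hzs] at hcomb
end

section
/- Let J ⊆ I and Λ ∈ P⁺. The subgroup U^J := ⋂_{σ∈W_J} σU⁺σ⁻¹ fixes every point of L_J(Λ) := U(n_J⁻)·L(Λ)_Λ pointwise. -/
attribute [local instance] LieRing.ofAssociativeRing

private theorem coeffs_zero
    (F : Type) [Field F] [CharZero F] [Infinite F]
    (M : Type) [AddCommGroup M] [Module F M]
    (N : ℕ) (c : ℕ → M)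
    (h : ∀ t : F, ∑ k ∈ Finset.range N, ((t ^ k) / (Nat.factorial k : F)) • c k = 0) :
    ∀ k < N, c k = 0 := by
  intro k hk
  rw [← Module.forall_dual_apply_eq_zero_iff F]
  intro f
  set p : Polynomial F :=
    ∑ j ∈ Finset.range N, Polynomial.C (f (c j) / (Nat.factorial j : F)) * Polynomial.X ^ j with hp
  have hpz : p = 0 := by
    apply Polynomial.funext
    intro t
    have := congrArg f (h t)
    simp only [map_sum, map_smul, map_zero, smul_eq_mul] at this
    simp only [hp, Polynomial.eval_finset_sum, Polynomial.eval_mul, Polynomial.eval_C,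
      Polynomial.eval_pow, Polynomial.eval_X, Polynomial.eval_zero]
    rw [← this]
    exact Finset.sum_congr rfl fun j _ => by ring
  have hcoeff : p.coeff k = f (c k) / (Nat.factorial k : F) := by
    simp only [hp, Polynomial.finset_sum_coeff, Polynomial.coeff_C_mul, Polynomial.coeff_X_pow]
    rw [Finset.sum_eq_single k]
    · simp
    · intro j _ hj; simp [Ne.symm hj]
    · intro hnk; exact absurd (Finset.mem_range.2 hk) hnk
  rw [hpz, Polynomial.coeff_zero] at hcoeff
  have hfac : ((Nat.factorial k : F)) ≠ 0 := Nat.cast_ne_zero.2 (Nat.factorial_ne_zero k)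
  have := hcoeff.symm
  rw [div_eq_zero_iff] at this
  tauto

/-- `U^J` fixes `L_J(Λ) = U(n_J⁻)·L(Λ)_Λ` pointwise.  Abstractly: `M = L(Λ)` is a module
over the infinite field `F` of characteristic `0`, `A` is the set of the root operators
spanning the root spaces `g_β`, `β ∈ (Δ_J)⁻_re` (each acting locally nilpotently), which
generates the Lie algebra `n_J⁻` inside `End(M)`; `expo y t` is the exponential
`exp(t·y)`; `U` (the group `U^J`) fixes the highest weight vector `vΛ`, is closed under
multiplication, and is normalized by all `exp(t·y)`, `y ∈ A`.  Then every `u ∈ U` fixes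
every element of the span of the vectors `x₁ ⋯ xₙ vΛ`, `xᵢ ∈ n_J⁻`. -/
theorem UJ_fixes_LJ
    (F : Type) [Field F] [CharZero F] [Infinite F]
    (M : Type) [AddCommGroup M] [Module F M]
    (A U : Set (Module.End F M))
    (expo : Module.End F M → F → Module.End F M)
    (vΛ : M)
    (hnil : ∀ y ∈ A, ∀ m : M, ∃ N : ℕ, (y ^ N) m = 0)
    (hexp : ∀ y ∈ A, ∀ t : F, ∀ m : M, ∃ N : ℕ,
      (∀ k ≥ N, (y ^ k) m = 0) ∧
      expo y t m = ∑ k ∈ Finset.range N, ((t ^ k) / (Nat.factorial k : F)) • (y ^ k) m)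
    (hUmul : ∀ u ∈ U, ∀ u' ∈ U, u * u' ∈ U)
    (hnormal : ∀ u ∈ U, ∀ y ∈ A, ∀ t : F, ∃ u' ∈ U, u * expo y t = expo y t * u')
    (hfix : ∀ u ∈ U, u vΛ = vΛ) :
    ∀ u ∈ U, ∀ m ∈ Submodule.span F
      {m : M | ∃ l : List (Module.End F M),
        (∀ x ∈ l, x ∈ LieSubalgebra.lieSpan F (Module.End F M) A) ∧
        m = l.foldr (fun x v => x v) vΛ},
      u m = m := by
  -- the submodule of `U`-fixed points
  let V : Submodule F M :=
    { carrier := {x | ∀ u ∈ U, u x = x}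
      add_mem' := fun ha hb u hu => by rw [map_add, ha u hu, hb u hu]
      zero_mem' := fun u hu => map_zero u
      smul_mem' := fun t x hx u hu => by rw [map_smul, hx u hu] }
  -- each `y ∈ A` preserves `V`
  have hstep : ∀ y ∈ A, ∀ x ∈ V, y x ∈ V := by
    intro y hy x hx u hu
    obtain ⟨N₀, hN₀, _⟩ := hexp y hy 0 x
    have key : ∀ t : F, expo y t x
        = ∑ k ∈ Finset.range N₀, ((t ^ k) / (Nat.factorial k : F)) • (y ^ k) x := by
      intro t
      obtain ⟨Nt, hNt, he⟩ := hexp y hy t x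
      rw [he]
      have e1 : ∑ k ∈ Finset.range Nt, ((t ^ k) / (Nat.factorial k : F)) • (y ^ k) x
          = ∑ k ∈ Finset.range (max N₀ Nt), ((t ^ k) / (Nat.factorial k : F)) • (y ^ k) x :=
        Finset.sum_subset (Finset.range_subset_range.2 (le_max_right _ _))
          (fun k _ hk => by
            rw [hNt k (le_of_not_gt fun h => hk (Finset.mem_range.2 h)), smul_zero])
      have e2 : ∑ k ∈ Finset.range N₀, ((t ^ k) / (Nat.factorial k : F)) • (y ^ k) x
          = ∑ k ∈ Finset.range (max N₀ Nt), ((t ^ k) / (Nat.factorial k : F)) • (y ^ k) x :=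
        Finset.sum_subset (Finset.range_subset_range.2 (le_max_left _ _))
          (fun k _ hk => by
            rw [hN₀ k (le_of_not_gt fun h => hk (Finset.mem_range.2 h)), smul_zero])
      rw [e1, ← e2]
    by_cases hN : N₀ ≤ 1
    · have hz : y x = 0 := by have := hN₀ 1 hN; rwa [pow_one] at this
      rw [hz, map_zero]
    · push_neg at hN
      have hz : ∀ t : F, ∑ k ∈ Finset.range N₀,
          ((t ^ k) / (Nat.factorial k : F)) • (u ((y ^ k) x) - (y ^ k) x) = 0 := by
        intro t
        obtain ⟨u', hu', hcomm⟩ := hnormal u hu y hy t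
        have h1 : u (expo y t x) = expo y t x := by
          calc u (expo y t x) = (u * expo y t) x := rfl
            _ = (expo y t * u') x := by rw [hcomm]
            _ = expo y t (u' x) := rfl
            _ = expo y t x := by rw [hx u' hu']
        have hL : ∑ k ∈ Finset.range N₀,
            ((t ^ k) / (Nat.factorial k : F)) • u ((y ^ k) x) = u (expo y t x) := by
          rw [key t, map_sum]
          simp only [map_smul]
        simp only [smul_sub, Finset.sum_sub_distrib, hL, ← key t, h1, sub_self]
      have hc := coeffs_zero F M N₀ _ hz 1 hN
      rw [pow_one] at hc
      exact sub_eq_zero.mp hc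
  -- the stabilizer of `V` is a Lie subalgebra, hence contains `lieSpan F _ A`
  have hlie : ∀ z ∈ LieSubalgebra.lieSpan F (Module.End F M) A, ∀ x ∈ V, z x ∈ V := by
    let S : LieSubalgebra F (Module.End F M) :=
      { carrier := {z | ∀ x ∈ V, z x ∈ V}
        add_mem' := fun {a b} ha hb x hx => by
          rw [LinearMap.add_apply]; exact V.add_mem (ha x hx) (hb x hx)
        zero_mem' := fun x hx => by rw [LinearMap.zero_apply]; exact V.zero_mem
        smul_mem' := fun t a ha x hx => by
          rw [LinearMap.smul_apply]; exact V.smul_mem t (ha x hx)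
        lie_mem' := fun {a b} ha hb x hx => by
          rw [Ring.lie_def, LinearMap.sub_apply, Module.End.mul_apply, Module.End.mul_apply]
          exact V.sub_mem (ha _ (hb x hx)) (hb _ (ha x hx)) }
    have hAS : LieSubalgebra.lieSpan F (Module.End F M) A ≤ S :=
      LieSubalgebra.lieSpan_le.2 fun y hy => hstep y hy
    exact fun z hz => hAS hz
  -- the generating vectors lie in `V`
  have hfold : ∀ l : List (Module.End F M),
      (∀ x ∈ l, x ∈ LieSubalgebra.lieSpan F (Module.End F M) A) →
      l.foldr (fun x v => x v) vΛ ∈ V := by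
    intro l
    induction l with
    | nil => exact fun _ u hu => hfix u hu
    | cons x xs ih =>
      intro hl
      exact hlie x (hl x (by simp)) _ (ih fun z hz => hl z (by simp [hz]))
  have hspan : Submodule.span F
      {m : M | ∃ l : List (Module.End F M),
        (∀ x ∈ l, x ∈ LieSubalgebra.lieSpan F (Module.End F M) A) ∧
        m = l.foldr (fun x v => x v) vΛ} ≤ V := by
    rw [Submodule.span_le]
    rintro _ ⟨l, hl, rfl⟩
    exact hfold l hl
  intro u hu m hm
  exact hspan hm u hu
end
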